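/- arXiv:2012.12747 — 2 statements merged into one kernel-verified Lean document; each statement's English description precedes it below -/
import Mathlib

section
/- For any x ∈ ℝ^n, η > 0, γ > 0, 0 < h_0 ≤ η/4, and locally integrable f, g on ℝ^n, it holds that ∬_{|x-y|+|x-z|>η/4} h_0^γ (|x-y|+|x-z|)^{-(2n+γ)} |f(y)||g(z)| dy dz ≤ C h_0^γ η^{-γ} 𝓜(f,g)(x), where C depends only on n and γ, and 𝓜 is the bilinear Hardy–Littlewood maximal operator. -/
open MeasureTheory Filter Set ENNReal
open scoped Topology

noncomputable section

/-- Euclidean space `ℝ^n`. -/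
abbrev En (n : ℕ) := EuclideanSpace ℝ (Fin n)

/-- The cube in `ℝ^n` centered at `c` with side length `2r`. -/
def cube {n : ℕ} (c : En n) (r : ℝ) : Set (En n) := {y | ∀ i, |y i - c i| ≤ r}

/-- The bilinear Hardy–Littlewood maximal operator
`𝓜(f,g)(x) = sup_{Q ∋ x} (|Q|⁻¹∫_Q |f|)(|Q|⁻¹∫_Q |g|)`, valued in `ℝ≥0∞`. -/
def biMax {n : ℕ} (f g : En n → ℝ) (x : En n) : ℝ≥0∞ :=
  ⨆ (c : En n) (r : ℝ) (_ : 0 < r) (_ : x ∈ cube c r),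
    ((∫⁻ y in cube c r, ENNReal.ofReal |f y|) / volume (cube c r)) *
    ((∫⁻ z in cube c r, ENNReal.ofReal |g z|) / volume (cube c r))

lemma abs_coord_le_norm {n : ℕ} (v : En n) (i : Fin n) : |v i| ≤ ‖v‖ := by
  rw [EuclideanSpace.norm_eq, ← Real.sqrt_sq_eq_abs]
  apply Real.sqrt_le_sqrt
  calc v i ^ 2 = ‖v i‖ ^ 2 := by simp [Real.norm_eq_abs, sq_abs]
    _ ≤ ∑ j, ‖v j‖ ^ 2 :=
        Finset.single_le_sum (f := fun j => ‖v j‖ ^ 2) (fun j _ => by positivity)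
          (Finset.mem_univ i)

lemma cube_eq_preimage {n : ℕ} (c : En n) (r : ℝ) :
    cube c r = (MeasurableEquiv.toLp 2 (Fin n → ℝ)).symm ⁻¹'
      (Set.univ.pi fun i => Icc (c i - r) (c i + r)) := by
  ext y
  simp only [cube, mem_setOf_eq, mem_preimage, Set.mem_pi, Set.mem_univ, forall_true_left,
    mem_Icc, MeasurableEquiv.toLp_symm_apply, MeasurableEquiv.coe_toLp_symm, abs_le]
  constructor
  · intro h i; have := h i; constructor <;> linarith [this.1, this.2]
  · intro h i; have := h i; constructor <;> linarith [this.1, this.2]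

lemma volume_cube {n : ℕ} (c : En n) (r : ℝ) (hr : 0 ≤ r) :
    volume (cube c r) = ENNReal.ofReal (2 * r) ^ n := by
  rw [cube_eq_preimage]
  rw [(EuclideanSpace.volume_preserving_symm_measurableEquiv_toLp (Fin n)).measure_preimage
    ((MeasurableSet.univ_pi (fun i => measurableSet_Icc)).nullMeasurableSet)]
  rw [volume_pi_pi]
  simp only [Real.volume_Icc]
  have h2 : ∀ x : Fin n, c x + r - (c x - r) = 2 * r := fun x => by ring
  simp only [h2]
  rw [Finset.prod_const, Finset.card_univ, Fintype.card_fin]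

lemma cube_mem_self {n : ℕ} (x : En n) {r : ℝ} (hr : 0 ≤ r) : x ∈ cube x r :=
  fun i => by simpa using hr

lemma prod_cube_bound {n : ℕ} (f g : En n → ℝ) (hf : LocallyIntegrable f volume)
    (hg : LocallyIntegrable g volume) (x : En n) (R : ℝ) (hR : 0 < R) :
    (∫⁻ q in (cube x R) ×ˢ (cube x R), ENNReal.ofReal |f q.1| * ENNReal.ofReal |g q.2|) ≤
      volume (cube x R) * volume (cube x R) * biMax f g x := by
  have hv0 : volume (cube x R) ≠ 0 := by
    rw [volume_cube _ _ hR.le]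
    exact pow_ne_zero _ (ENNReal.ofReal_pos.mpr (by linarith)).ne'
  have hvt : volume (cube x R) ≠ ⊤ := by
    rw [volume_cube _ _ hR.le]
    exact ENNReal.pow_ne_top ENNReal.ofReal_ne_top
  have hmf : AEMeasurable (fun y => ENNReal.ofReal |f y|) (volume.restrict (cube x R)) :=
    (ENNReal.measurable_ofReal.comp measurable_abs).comp_aemeasurable
      (hf.aestronglyMeasurable.aemeasurable.restrict)
  have hmg : AEMeasurable (fun y => ENNReal.ofReal |g y|) (volume.restrict (cube x R)) :=
    (ENNReal.measurable_ofReal.comp measurable_abs).comp_aemeasurable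
      (hg.aestronglyMeasurable.aemeasurable.restrict)
  have hrw : (volume : Measure (En n × En n)).restrict ((cube x R) ×ˢ (cube x R))
      = (volume.restrict (cube x R)).prod (volume.restrict (cube x R)) := by
    rw [Measure.volume_eq_prod, Measure.prod_restrict]
  rw [hrw, lintegral_prod_mul hmf hmg]
  set v := volume (cube x R)
  set If := ∫⁻ y in cube x R, ENNReal.ofReal |f y|
  set Ig := ∫⁻ z in cube x R, ENNReal.ofReal |g z|
  have h1 : If * Ig = (If / v) * (Ig / v) * (v * v) := by
    calc If * Ig = (If / v * v) * (Ig / v * v) := by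
          rw [ENNReal.div_mul_cancel hv0 hvt, ENNReal.div_mul_cancel hv0 hvt]
      _ = (If / v) * (Ig / v) * (v * v) := mul_mul_mul_comm _ _ _ _
  rw [h1]
  have hsup : (If / v) * (Ig / v) ≤ biMax f g x :=
    le_iSup_of_le x (le_iSup_of_le R (le_iSup_of_le hR
      (le_iSup_of_le (cube_mem_self x hR.le) le_rfl)))
  calc (If / v) * (Ig / v) * (v * v) ≤ biMax f g x * (v * v) := mul_le_mul_left hsup _
    _ = v * v * biMax f g x := mul_comm _ _

lemma real_calc (n : ℕ) {γ η h₀ : ℝ} (hγ : 0 < γ) (hη : 0 < η) (hh₀ : 0 ≤ h₀) (j : ℕ) :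
    h₀ ^ γ * (η / 4 * 2 ^ j) ^ (-(2 * (n:ℝ) + γ)) *
      ((2 * (η / 4 * 2 ^ (j+1))) ^ n * (2 * (η / 4 * 2 ^ (j+1))) ^ n)
      = h₀ ^ γ * (4:ℝ) ^ (2 * (n:ℝ) + γ) * η ^ (-γ) * ((2:ℝ) ^ (-γ)) ^ j := by
  have ht : (0:ℝ) < η * 2 ^ j := by positivity
  have h1 : η / 4 * 2 ^ j = (η * 2 ^ j) / 4 := by ring
  have h2 : 2 * (η / 4 * 2 ^ (j+1)) = η * 2 ^ j := by ring
  rw [h1, h2]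
  set t := η * 2 ^ j with htd
  have h3 : (t / 4) ^ (-(2 * (n:ℝ) + γ)) = t ^ (-(2 * (n:ℝ) + γ)) * (4:ℝ) ^ (2 * (n:ℝ) + γ) := by
    rw [Real.div_rpow ht.le (by norm_num), div_eq_mul_inv, ← Real.rpow_neg (by norm_num), neg_neg]
  have h4 : t ^ n * t ^ n = t ^ ((2 * (n:ℝ))) := by
    rw [← pow_add, ← Real.rpow_natCast t (n+n)]
    congr 1; push_cast; ring
  have h5 : t ^ (-(2 * (n:ℝ) + γ)) * t ^ (2 * (n:ℝ)) = t ^ (-γ) := by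
    rw [← Real.rpow_add ht]; congr 1; ring
  have h6 : t ^ (-γ) = η ^ (-γ) * ((2:ℝ) ^ (-γ)) ^ j := by
    rw [htd, Real.mul_rpow hη.le (by positivity)]
    congr 1
    rw [← Real.rpow_natCast (2:ℝ) j, ← Real.rpow_mul (by norm_num), mul_comm ((j:ℝ)) (-γ),
      Real.rpow_mul (by norm_num), Real.rpow_natCast]
  calc h₀^γ * (t/4)^(-(2*(n:ℝ)+γ)) * (t^n * t^n)
      = h₀^γ * (t^(-(2*(n:ℝ)+γ)) * 4^(2*(n:ℝ)+γ)) * t^(2*(n:ℝ)) := by rw [h3, h4]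
    _ = h₀^γ * 4^(2*(n:ℝ)+γ) * (t^(-(2*(n:ℝ)+γ)) * t^(2*(n:ℝ))) := by ring
    _ = h₀^γ * 4^(2*(n:ℝ)+γ) * t^(-γ) := by rw [h5]
    _ = _ := by rw [h6]; ring

/-- the dyadic-annuli estimate
`∬_{|x-y|+|x-z|>η/4} h₀^γ (|x-y|+|x-z|)^{-(2n+γ)} |f(y)||g(z)| dy dz
  ≤ C h₀^γ η^{-γ} 𝓜(f,g)(x)`, with `C = C(n,γ)`. -/
theorem annuli_splitting_bound (n : ℕ) (hn : 1 ≤ n) (γ : ℝ) (hγ : 0 < γ) :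
    ∃ C : ℝ, 0 < C ∧ ∀ (x : En n) (η h₀ : ℝ), 0 < η → 0 < h₀ → h₀ ≤ η/4 →
      ∀ f g : En n → ℝ, LocallyIntegrable f volume → LocallyIntegrable g volume →
      (∫⁻ q in {q : En n × En n | η/4 < ‖x - q.1‖ + ‖x - q.2‖},
          ENNReal.ofReal (h₀ ^ γ * (‖x - q.1‖ + ‖x - q.2‖) ^ (-(2*(n:ℝ) + γ)) *
            |f q.1| * |g q.2|)) ≤
        ENNReal.ofReal (C * h₀ ^ γ * η ^ (-γ)) * biMax f g x := by
  have hqrnn : (0:ℝ) ≤ (2:ℝ) ^ (-γ) := Real.rpow_nonneg (by norm_num) _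
  have h2γ : (0:ℝ) < 1 - (2:ℝ) ^ (-γ) := by
    have := Real.rpow_lt_one_of_one_lt_of_neg (x := (2:ℝ)) one_lt_two (neg_lt_zero.mpr hγ)
    linarith
  have h4p : (0:ℝ) < (4:ℝ) ^ (2*(n:ℝ)+γ) := Real.rpow_pos_of_pos (by norm_num) _
  refine ⟨(4:ℝ) ^ (2*(n:ℝ)+γ) * (1 - (2:ℝ)^(-γ))⁻¹, mul_pos h4p (inv_pos.mpr h2γ), ?_⟩
  intro x η h₀ hη hh₀ _ f g hf hg
  have hη4 : (0:ℝ) < η/4 := by linarith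
  set s : En n × En n → ℝ := fun q => ‖x - q.1‖ + ‖x - q.2‖ with hs_def
  have hs_cont : Continuous s := by
    apply Continuous.add
    · exact (continuous_const.sub continuous_fst).norm
    · exact (continuous_const.sub continuous_snd).norm
  set A : ℕ → Set (En n × En n) := fun j => s ⁻¹' Ioc (η/4 * 2^j) (η/4 * 2^(j+1)) with hA_def
  have hAm : ∀ j, MeasurableSet (A j) := fun j => hs_cont.measurable measurableSet_Ioc
  have hU : {q : En n × En n | η/4 < s q} = ⋃ j, A j := by
    ext q
    simp only [hA_def, mem_setOf_eq, mem_iUnion, mem_preimage, mem_Ioc]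
    constructor
    · intro h
      have hP : ∃ j : ℕ, s q ≤ η/4 * 2^(j+1) := by
        obtain ⟨m, hm⟩ := pow_unbounded_of_one_lt (s q / (η/4)) (y := (2:ℝ)) one_lt_two
        refine ⟨m, ?_⟩
        rw [div_lt_iff₀ hη4] at hm
        have h2m : (0:ℝ) < 2^m := by positivity
        have hpe : (2:ℝ)^(m+1) = 2 * 2^m := by ring
        nlinarith [hm, h2m, hη4, hpe]
      refine ⟨Nat.find hP, ?_, Nat.find_spec hP⟩
      rcases Nat.eq_zero_or_pos (Nat.find hP) with h0 | hpos
      · rw [h0]; simpa using h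
      · have hj : Nat.find hP - 1 < Nat.find hP := Nat.sub_lt hpos one_pos
        have hmin := Nat.find_min hP hj
        have heq : Nat.find hP - 1 + 1 = Nat.find hP := by omega
        rw [heq] at hmin
        exact not_le.mp hmin
    · rintro ⟨j, hj1, hj2⟩
      have h1 : η/4 * 1 ≤ η/4 * 2^j :=
        mul_le_mul_of_nonneg_left (one_le_pow₀ (by norm_num : (1:ℝ) ≤ 2)) hη4.le
      calc η/4 = η/4 * 1 := (mul_one _).symm
        _ ≤ η/4 * 2^j := h1
        _ < s q := hj1
  have hdisj : Pairwise (Function.onFun Disjoint A) := by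
    have key : ∀ i j : ℕ, i < j → Disjoint (A i) (A j) := by
      intro i j hij
      rw [Set.disjoint_left]
      intro q hqi hqj
      simp only [hA_def, mem_preimage, mem_Ioc] at hqi hqj
      have h2 : (2:ℝ)^(i+1) ≤ 2^j := by gcongr <;> [norm_num; omega]
      have h3 : η/4 * 2^(i+1) ≤ η/4 * 2^j := mul_le_mul_of_nonneg_left h2 hη4.le
      linarith [hqi.2, hqj.1]
    intro i j hij
    rcases hij.lt_or_gt with h | h
    · exact key i j h
    · exact (key j i h).symm
  rw [hU, lintegral_iUnion hAm hdisj]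
  set M := biMax f g x with hM_def
  have hEnn : (0:ℝ) ≤ h₀ ^ γ * (4:ℝ)^(2*(n:ℝ)+γ) * η^(-γ) := by positivity
  have hterm : ∀ j : ℕ,
      (∫⁻ q in A j, ENNReal.ofReal (h₀^γ * s q ^ (-(2*(n:ℝ) + γ)) * |f q.1| * |g q.2|))
      ≤ ENNReal.ofReal ((h₀^γ * (4:ℝ)^(2*(n:ℝ)+γ) * η^(-γ)) * ((2:ℝ)^(-γ))^j) * M := by
    intro j
    have hRpos : (0:ℝ) < η/4 * 2^(j+1) := by positivity
    have hcpos : (0:ℝ) < η/4 * 2^j := by positivity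
    have hKnn : (0:ℝ) ≤ h₀^γ * (η/4*2^j) ^ (-(2*(n:ℝ) + γ)) := by positivity
    have henn : -(2*(n:ℝ) + γ) ≤ 0 := by
      have : (0:ℝ) ≤ (n:ℝ) := n.cast_nonneg
      linarith
    have step1 : (∫⁻ q in A j, ENNReal.ofReal (h₀^γ * s q ^ (-(2*(n:ℝ) + γ)) * |f q.1| * |g q.2|))
        ≤ ∫⁻ q in A j, ENNReal.ofReal (h₀^γ * (η/4*2^j) ^ (-(2*(n:ℝ) + γ))) *
            (ENNReal.ofReal |f q.1| * ENNReal.ofReal |g q.2|) := by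
      apply setLIntegral_mono' (hAm j)
      intro q hq
      simp only [hA_def, mem_preimage, mem_Ioc] at hq
      have hse : s q ^ (-(2*(n:ℝ) + γ)) ≤ (η/4*2^j) ^ (-(2*(n:ℝ) + γ)) :=
        Real.rpow_le_rpow_of_nonpos hcpos hq.1.le henn
      calc ENNReal.ofReal (h₀^γ * s q ^ (-(2*(n:ℝ) + γ)) * |f q.1| * |g q.2|)
          ≤ ENNReal.ofReal (h₀^γ * (η/4*2^j) ^ (-(2*(n:ℝ) + γ)) * |f q.1| * |g q.2|) := by
            apply ENNReal.ofReal_le_ofReal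
            have hb : (0:ℝ) ≤ h₀ ^ γ := Real.rpow_nonneg hh₀.le γ
            have h1 := mul_le_mul_of_nonneg_left hse hb
            have h2 := mul_le_mul_of_nonneg_right h1 (abs_nonneg (f q.1))
            exact mul_le_mul_of_nonneg_right h2 (abs_nonneg (g q.2))
        _ = ENNReal.ofReal (h₀^γ * (η/4*2^j) ^ (-(2*(n:ℝ) + γ))) *
              (ENNReal.ofReal |f q.1| * ENNReal.ofReal |g q.2|) := by
            rw [ENNReal.ofReal_mul (mul_nonneg hKnn (abs_nonneg _)),
              ENNReal.ofReal_mul hKnn, mul_assoc]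
    have hsub : A j ⊆ (cube x (η/4 * 2^(j+1))) ×ˢ (cube x (η/4 * 2^(j+1))) := by
      intro q hq
      simp only [hA_def, mem_preimage, mem_Ioc, hs_def] at hq
      have hn1 : (0:ℝ) ≤ ‖x - q.1‖ := norm_nonneg _
      have hn2 : (0:ℝ) ≤ ‖x - q.2‖ := norm_nonneg _
      rw [Set.mem_prod]
      constructor
      · intro i
        calc |q.1 i - x i| = |(q.1 - x) i| := by rw [PiLp.sub_apply]
          _ ≤ ‖q.1 - x‖ := abs_coord_le_norm _ _
          _ = ‖x - q.1‖ := norm_sub_rev _ _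
          _ ≤ η/4 * 2^(j+1) := by linarith [hq.2]
      · intro i
        calc |q.2 i - x i| = |(q.2 - x) i| := by rw [PiLp.sub_apply]
          _ ≤ ‖q.2 - x‖ := abs_coord_le_norm _ _
          _ = ‖x - q.2‖ := norm_sub_rev _ _
          _ ≤ η/4 * 2^(j+1) := by linarith [hq.2]
    calc (∫⁻ q in A j, ENNReal.ofReal (h₀^γ * s q ^ (-(2*(n:ℝ) + γ)) * |f q.1| * |g q.2|))
        ≤ ∫⁻ q in A j, ENNReal.ofReal (h₀^γ * (η/4*2^j) ^ (-(2*(n:ℝ) + γ))) *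
            (ENNReal.ofReal |f q.1| * ENNReal.ofReal |g q.2|) := step1
      _ ≤ ∫⁻ q in (cube x (η/4 * 2^(j+1))) ×ˢ (cube x (η/4 * 2^(j+1))),
            ENNReal.ofReal (h₀^γ * (η/4*2^j) ^ (-(2*(n:ℝ) + γ))) *
            (ENNReal.ofReal |f q.1| * ENNReal.ofReal |g q.2|) := lintegral_mono_set hsub
      _ = ENNReal.ofReal (h₀^γ * (η/4*2^j) ^ (-(2*(n:ℝ) + γ))) *
            ∫⁻ q in (cube x (η/4 * 2^(j+1))) ×ˢ (cube x (η/4 * 2^(j+1))),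
              ENNReal.ofReal |f q.1| * ENNReal.ofReal |g q.2| :=
          lintegral_const_mul' _ _ ENNReal.ofReal_ne_top
      _ ≤ ENNReal.ofReal (h₀^γ * (η/4*2^j) ^ (-(2*(n:ℝ) + γ))) *
            (volume (cube x (η/4 * 2^(j+1))) * volume (cube x (η/4 * 2^(j+1))) * M) :=
          mul_le_mul_right (prod_cube_bound f g hf hg x _ hRpos) _
      _ = ENNReal.ofReal (h₀^γ * (η/4*2^j) ^ (-(2*(n:ℝ) + γ)) *
            ((2 * (η/4 * 2^(j+1)))^n * (2 * (η/4 * 2^(j+1)))^n)) * M := by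
          rw [volume_cube _ _ hRpos.le,
            ← ENNReal.ofReal_pow (by positivity : (0:ℝ) ≤ 2 * (η/4 * 2^(j+1)))]
          rw [ENNReal.ofReal_mul hKnn,
            ENNReal.ofReal_mul (by positivity : (0:ℝ) ≤ (2 * (η/4 * 2^(j+1)))^n)]
          ring
      _ = ENNReal.ofReal ((h₀^γ * (4:ℝ)^(2*(n:ℝ)+γ) * η^(-γ)) * ((2:ℝ)^(-γ))^j) * M := by
          congr 1
          rw [real_calc n hγ hη hh₀.le j]
  calc (∑' j, ∫⁻ q in A j, ENNReal.ofReal (h₀^γ * s q ^ (-(2*(n:ℝ) + γ)) * |f q.1| * |g q.2|))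
      ≤ ∑' j, ENNReal.ofReal ((h₀^γ * (4:ℝ)^(2*(n:ℝ)+γ) * η^(-γ)) * ((2:ℝ)^(-γ))^j) * M :=
        ENNReal.tsum_le_tsum hterm
    _ = ∑' j, (ENNReal.ofReal (h₀^γ * (4:ℝ)^(2*(n:ℝ)+γ) * η^(-γ)) *
          (ENNReal.ofReal ((2:ℝ)^(-γ)))^j) * M := by
        apply tsum_congr; intro j
        rw [ENNReal.ofReal_mul hEnn, ENNReal.ofReal_pow hqrnn]
    _ = (∑' j, ENNReal.ofReal (h₀^γ * (4:ℝ)^(2*(n:ℝ)+γ) * η^(-γ)) *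
          (ENNReal.ofReal ((2:ℝ)^(-γ)))^j) * M := ENNReal.tsum_mul_right
    _ = ENNReal.ofReal (h₀^γ * (4:ℝ)^(2*(n:ℝ)+γ) * η^(-γ)) *
          (∑' j, (ENNReal.ofReal ((2:ℝ)^(-γ)))^j) * M := by rw [ENNReal.tsum_mul_left]
    _ = ENNReal.ofReal (h₀^γ * (4:ℝ)^(2*(n:ℝ)+γ) * η^(-γ)) *
          (1 - ENNReal.ofReal ((2:ℝ)^(-γ)))⁻¹ * M := by rw [ENNReal.tsum_geometric]
    _ = ENNReal.ofReal ((4:ℝ)^(2*(n:ℝ)+γ) * (1 - (2:ℝ)^(-γ))⁻¹ * h₀^γ * η^(-γ)) * M := by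
        have h1 : (1:ℝ≥0∞) - ENNReal.ofReal ((2:ℝ)^(-γ)) = ENNReal.ofReal (1 - (2:ℝ)^(-γ)) := by
          rw [ENNReal.ofReal_sub _ hqrnn, ENNReal.ofReal_one]
        rw [h1, ← ENNReal.ofReal_inv_of_pos h2γ, ← ENNReal.ofReal_mul hEnn]
        congr 1
        ring

end
end

section
/- Let w be a weight on ℝ^n such that w^{-1/(p_0-1)} is also a weight (i.e., locally integrable) for some p_0 > 1. Let 0 < p < ∞ and let 𝓕 ⊂ L^p(w). If (i) sup_{f∈𝓕} ‖f‖_{L^p(w)} < ∞, (ii) lim_{N→∞} sup_{f∈𝓕} ∫_{|x|>N}|f(x)|^p w(x)dx = 0, and (iii) lim_{|h|→0} sup_{f∈𝓕} ∫_{ℝ^n}|f(x+h)-f(x)|^p w(x)dx = 0, then 𝓕 is sequentially compact in L^p(w), i.e., every sequence in 𝓕 has a subsequence converging in L^p(w). -/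
open MeasureTheory Filter Set ENNReal
open scoped Topology

noncomputable section

namespace WFK

variable {n : ℕ}

def Dst (p : ℝ) (w : En n → ℝ) (f g : En n → ℝ) : ℝ≥0∞ :=
  ∫⁻ x, ENNReal.ofReal (|f x - g x| ^ p * w x)

lemma Dst_comm (p : ℝ) (w f g : En n → ℝ) : Dst p w f g = Dst p w g f := by
  unfold Dst; congr 1 with x; rw [abs_sub_comm]

lemma rpow_add_le (p : ℝ) (hp : 0 < p) {a b : ℝ} (ha : 0 ≤ a) (hb : 0 ≤ b) :
    (a + b) ^ p ≤ 2 ^ p * (a ^ p + b ^ p) := by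
  have h1 : a + b ≤ 2 * max a b := by
    rcases le_total a b with h | h
    · calc a + b ≤ b + b := by linarith
        _ = 2 * b := by ring
        _ ≤ 2 * max a b := by rw [max_eq_right h]
    · calc a + b ≤ a + a := by linarith
        _ = 2 * a := by ring
        _ ≤ 2 * max a b := by rw [max_eq_left h]
  have hmax : (0:ℝ) ≤ max a b := le_trans ha (le_max_left _ _)
  calc (a + b) ^ p ≤ (2 * max a b) ^ p :=
        Real.rpow_le_rpow (by linarith) h1 hp.le
    _ = 2 ^ p * (max a b) ^ p := Real.mul_rpow (by norm_num) hmax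
    _ ≤ 2 ^ p * (a ^ p + b ^ p) := by
        apply mul_le_mul_of_nonneg_left _ (Real.rpow_nonneg (by norm_num) p)
        rcases le_total a b with h | h
        · rw [max_eq_right h]
          nlinarith [Real.rpow_nonneg ha p]
        · rw [max_eq_left h]
          nlinarith [Real.rpow_nonneg hb p]

/-- Pointwise quasi-triangle inequality. -/
lemma abs_rpow_quasi (p : ℝ) (hp : 0 < p) (a b c : ℝ) :
    |a - c| ^ p ≤ 2 ^ p * (|a - b| ^ p + |b - c| ^ p) := by
  have h1 : |a - c| ≤ |a - b| + |b - c| := abs_sub_le a b c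
  calc |a - c| ^ p ≤ (|a - b| + |b - c|) ^ p :=
        Real.rpow_le_rpow (abs_nonneg _) h1 hp.le
    _ ≤ 2 ^ p * (|a - b| ^ p + |b - c| ^ p) :=
        rpow_add_le p hp (abs_nonneg _) (abs_nonneg _)

lemma Dst_quasi (p : ℝ) (hp : 0 < p) (w : En n → ℝ) (hw0 : ∀ x, 0 ≤ w x)
    (f g h : En n → ℝ) (hfg : AEMeasurable (fun x => ENNReal.ofReal (|f x - g x| ^ p * w x)) volume) :
    Dst p w f h ≤ ENNReal.ofReal (2 ^ p) * (Dst p w f g + Dst p w g h) := by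
  have hpt : ∀ x, ENNReal.ofReal (|f x - h x| ^ p * w x) ≤
      ENNReal.ofReal (2 ^ p) * (ENNReal.ofReal (|f x - g x| ^ p * w x)
        + ENNReal.ofReal (|g x - h x| ^ p * w x)) := by
    intro x
    have h1 : |f x - h x| ^ p * w x ≤
        2 ^ p * (|f x - g x| ^ p * w x + |g x - h x| ^ p * w x) := by
      have := abs_rpow_quasi p hp (f x) (g x) (h x)
      nlinarith [hw0 x, Real.rpow_nonneg (abs_nonneg (f x - h x)) p]
    calc ENNReal.ofReal (|f x - h x| ^ p * w x) ≤
        ENNReal.ofReal (2 ^ p * (|f x - g x| ^ p * w x + |g x - h x| ^ p * w x)) :=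
          ENNReal.ofReal_le_ofReal h1
      _ = ENNReal.ofReal (2 ^ p) * (ENNReal.ofReal (|f x - g x| ^ p * w x)
            + ENNReal.ofReal (|g x - h x| ^ p * w x)) := by
          rw [ENNReal.ofReal_mul (Real.rpow_nonneg (by norm_num) p),
            ENNReal.ofReal_add (mul_nonneg (Real.rpow_nonneg (abs_nonneg _) p) (hw0 x))
              (mul_nonneg (Real.rpow_nonneg (abs_nonneg _) p) (hw0 x))]
  calc Dst p w f h ≤ ∫⁻ x, ENNReal.ofReal (2 ^ p) * (ENNReal.ofReal (|f x - g x| ^ p * w x)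
        + ENNReal.ofReal (|g x - h x| ^ p * w x)) := lintegral_mono hpt
    _ = ENNReal.ofReal (2 ^ p) * ∫⁻ x, (ENNReal.ofReal (|f x - g x| ^ p * w x)
        + ENNReal.ofReal (|g x - h x| ^ p * w x)) := lintegral_const_mul' _ _ ofReal_ne_top
    _ = ENNReal.ofReal (2 ^ p) * (Dst p w f g + Dst p w g h) := by
        rw [lintegral_add_left' hfg]; rfl


/-- grid index function -/
def zfun (s : ℝ) (x : En n) : Fin n → ℤ := fun i => ⌊x i / s⌋

/-- grid cube -/
def Qz (s : ℝ) (z : Fin n → ℤ) : Set (En n) := zfun s ⁻¹' {z}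

lemma zfun_measurable (s : ℝ) : Measurable (zfun (n := n) s) := by
  apply measurable_pi_lambda
  intro i
  have hproj : Measurable fun x : En n => x i :=
    (EuclideanSpace.proj (𝕜 := ℝ) i).continuous.measurable
  exact Int.measurable_floor.comp (hproj.div_const s)

lemma Qz_measurableSet (s : ℝ) (z : Fin n → ℤ) : MeasurableSet (Qz s z) :=
  (zfun_measurable s) (measurableSet_singleton z)

lemma mem_Qz_iff {s : ℝ} (hs : 0 < s) {z : Fin n → ℤ} {x : En n} :
    x ∈ Qz s z ↔ ∀ i, (z i : ℝ) * s ≤ x i ∧ x i < (z i + 1) * s := by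
  simp only [Qz, Set.mem_preimage, Set.mem_singleton_iff, funext_iff, zfun]
  apply forall_congr'
  intro i
  rw [Int.floor_eq_iff]
  constructor
  · rintro ⟨h1, h2⟩
    constructor
    · calc (z i : ℝ) * s ≤ (x i / s) * s := by
            apply mul_le_mul_of_nonneg_right h1 hs.le
        _ = x i := by field_simp
    · calc x i = (x i / s) * s := by field_simp
        _ < ((z i : ℝ) + 1) * s := by
            apply mul_lt_mul_of_pos_right h2 hs
  · rintro ⟨h1, h2⟩
    constructor
    · rw [le_div_iff₀ hs]; exact h1
    · rw [div_lt_iff₀ hs]; push_cast; exact h2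

lemma Qz_disjoint (s : ℝ) : Pairwise (Function.onFun Disjoint (Qz (n := n) s)) := by
  intro z z' hzz'
  apply Set.disjoint_left.2
  intro x hx hx'
  exact hzz' (hx.symm.trans hx')

lemma Qz_eq_pi (s : ℝ) (hs : 0 < s) (z : Fin n → ℤ) :
    Qz s z = (MeasurableEquiv.toLp 2 (Fin n → ℝ)).symm ⁻¹'
      (Set.pi Set.univ fun i => Set.Ico ((z i : ℝ) * s) (((z i : ℝ) + 1) * s)) := by
  ext x
  rw [mem_Qz_iff hs]
  simp only [Set.mem_preimage, Set.mem_pi, Set.mem_univ, forall_true_left, Set.mem_Ico]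
  rfl

lemma volume_Qz (s : ℝ) (hs : 0 < s) (z : Fin n → ℤ) :
    volume (Qz s z) = ENNReal.ofReal s ^ n := by
  rw [Qz_eq_pi s hs z,
    (EuclideanSpace.volume_preserving_symm_measurableEquiv_toLp (Fin n)).measure_preimage
      (MeasurableSet.univ_pi (fun i => measurableSet_Ico)).nullMeasurableSet,
    volume_pi_pi]
  have hsimp : ∀ i : Fin n, volume (Set.Ico ((z i : ℝ) * s) (((z i : ℝ) + 1) * s))
      = ENNReal.ofReal s := by
    intro i; rw [Real.volume_Ico]; congr 1; ring
  rw [Finset.prod_congr rfl (fun i _ => hsimp i), Finset.prod_const]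
  simp

/-- translation set -/
def Hset (s : ℝ) : Set (En n) := {h | ∀ i, |h i| < s}

lemma Hset_eq_pi (s : ℝ) :
    Hset (n := n) s = (MeasurableEquiv.toLp 2 (Fin n → ℝ)).symm ⁻¹'
      (Set.pi Set.univ fun _ => Set.Ioo (-s) s) := by
  ext x
  simp only [Hset, Set.mem_setOf_eq, Set.mem_preimage, Set.mem_pi, Set.mem_univ,
    forall_true_left, Set.mem_Ioo, abs_lt]
  rfl

lemma Hset_measurableSet (s : ℝ) : MeasurableSet (Hset (n := n) s) := by
  rw [Hset_eq_pi]
  exact (MeasurableEquiv.toLp 2 (Fin n → ℝ)).symm.measurable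
    (MeasurableSet.univ_pi (fun i => measurableSet_Ioo))

lemma volume_Hset (s : ℝ) (hs : 0 < s) :
    volume (Hset (n := n) s) = (2 : ℝ≥0∞) ^ n * ENNReal.ofReal s ^ n := by
  rw [Hset_eq_pi,
    (EuclideanSpace.volume_preserving_symm_measurableEquiv_toLp (Fin n)).measure_preimage
      (MeasurableSet.univ_pi (fun i => measurableSet_Ioo)).nullMeasurableSet,
    volume_pi_pi]
  simp only [Real.volume_Ioo]
  rw [Finset.prod_const]
  have : ENNReal.ofReal (s - -s) = 2 * ENNReal.ofReal s := by
    rw [show s - -s = 2 * s by ring, ENNReal.ofReal_mul (by norm_num)]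
    norm_num
  rw [this, mul_pow]
  simp

lemma abs_coord_le_norm (x : En n) (i : Fin n) : |x i| ≤ ‖x‖ := by
  rw [EuclideanSpace.norm_eq]
  rw [← Real.sqrt_sq_eq_abs]
  apply Real.sqrt_le_sqrt
  rw [show (x i) ^ 2 = ‖x i‖ ^ 2 by rw [Real.norm_eq_abs, sq_abs]]
  exact Finset.single_le_sum (fun j _ => sq_nonneg (‖x j‖)) (Finset.mem_univ i)

lemma norm_le_of_coord {x : En n} {t : ℝ} (ht : 0 ≤ t) (h : ∀ i, |x i| ≤ t) :
    ‖x‖ ≤ n * t := by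
  rw [EuclideanSpace.norm_eq]
  have h1 : ∑ i : Fin n, ‖x i‖ ^ 2 ≤ n * t ^ 2 := by
    calc ∑ i : Fin n, ‖x i‖ ^ 2 ≤ ∑ _i : Fin n, t ^ 2 := by
          apply Finset.sum_le_sum
          intro i _
          rw [Real.norm_eq_abs]
          exact pow_le_pow_left₀ (abs_nonneg _) (h i) 2
      _ = n * t ^ 2 := by rw [Finset.sum_const]; simp [mul_comm]
  calc Real.sqrt (∑ i : Fin n, ‖x i‖ ^ 2) ≤ Real.sqrt ((n * t) ^ 2) := by
        apply Real.sqrt_le_sqrt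
        calc ∑ i : Fin n, ‖x i‖ ^ 2 ≤ n * t ^ 2 := h1
          _ ≤ (n * t) ^ 2 := by
              rcases Nat.eq_zero_or_pos n with h0 | h0
              · simp [h0]
              · have : (1:ℝ) ≤ n := by exact_mod_cast h0
                nlinarith
    _ = n * t := Real.sqrt_sq (by positivity)


set_option maxHeartbeats 1000000 in
lemma claimA (p : ℝ) (hp : 0 < p) (w' : En n → ℝ) (hw'meas : Measurable w')
    (f' : En n → ℝ) (hf'meas : Measurable f') (s δ : ℝ) (hs : 0 < s)
    (hsδ : ∀ h : En n, h ∈ Hset s → ‖h‖ < δ) (I : Finset (Fin n → ℤ)) (ε₂ : ℝ≥0∞)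
    (hE : ∀ h : En n, ‖h‖ < δ →
      (∫⁻ x, ENNReal.ofReal (|f' (x + h) - f' x| ^ p * w' x)) ≤ ε₂) :
    ∑ z ∈ I, (∫⁻ y in Qz s z, ∫⁻ x in Qz s z, ENNReal.ofReal (|f' x - f' y| ^ p * w' x))
      ≤ (2 : ℝ≥0∞) ^ n * ENNReal.ofReal s ^ n * ε₂ := by
  classical
  set g : En n → En n → ℝ≥0∞ :=
    fun x y => ENNReal.ofReal (|f' x - f' y| ^ p * w' x) with hg
  have hgmeas : Measurable (Function.uncurry g) := by
    apply Measurable.ennreal_ofReal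
    apply Measurable.mul _ (hw'meas.comp measurable_fst)
    exact (Real.continuous_rpow_const hp.le).measurable.comp
      ((hf'meas.comp measurable_fst).sub (hf'meas.comp measurable_snd)).abs
  have hgmeas2 : Measurable (Function.uncurry (fun x h => g x (x + h))) := by
    have : (Function.uncurry (fun x h : En n => g x (x + h))) =
        (Function.uncurry g) ∘ (fun q : En n × En n => (q.1, q.1 + q.2)) := rfl
    rw [this]
    exact hgmeas.comp (measurable_fst.prodMk (measurable_fst.add measurable_snd))
  -- inner bound
  have hinner : ∀ z ∈ I, ∀ x ∈ Qz s z,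
      (∫⁻ y in Qz s z, g x y) ≤ ∫⁻ h in Hset s, g x (x + h) := by
    intro z _ x hx
    rw [← lintegral_indicator ((Qz_measurableSet s z)) (fun y => g x y),
      ← lintegral_indicator ((Hset_measurableSet s)) (fun h => g x (x + h))]
    calc (∫⁻ y, (Qz s z).indicator (fun y => g x y) y)
        = ∫⁻ h, (Qz s z).indicator (fun y => g x y) (x + h) :=
          (lintegral_add_left_eq_self (fun y => (Qz s z).indicator (fun y => g x y) y) x).symm
      _ ≤ ∫⁻ h, (Hset s).indicator (fun h => g x (x + h)) h := by
          apply lintegral_mono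
          intro h
          simp only
          by_cases hxh : (x + h) ∈ Qz s z
          · have hh : h ∈ Hset s := by
              intro i
              have h1 := (mem_Qz_iff hs).1 hx i
              have h2 := (mem_Qz_iff hs).1 hxh i
              have hadd : (x + h) i = x i + h i := rfl
              rw [hadd] at h2
              rw [abs_lt]
              constructor <;> nlinarith [h1.1, h1.2, h2.1, h2.2]
            rw [Set.indicator_of_mem hxh, Set.indicator_of_mem hh]
          · rw [Set.indicator_of_notMem hxh]
            exact zero_le
  -- per-cube swap and bound
  have hcube : ∀ z ∈ I,
      (∫⁻ y in Qz s z, ∫⁻ x in Qz s z, g x y)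
        ≤ ∫⁻ x in Qz s z, ∫⁻ h in Hset s, g x (x + h) := by
    intro z hz
    have hswap : (∫⁻ x in Qz s z, ∫⁻ y in Qz s z, g x y)
        = ∫⁻ y in Qz s z, ∫⁻ x in Qz s z, g x y :=
      lintegral_lintegral_swap (hgmeas.aemeasurable)
    rw [← hswap]
    apply lintegral_mono_ae
    rw [ae_restrict_iff' (Qz_measurableSet s z)]
    exact ae_of_all _ (fun x hx => hinner z hz x hx)
  -- sum over cubes
  calc ∑ z ∈ I, (∫⁻ y in Qz s z, ∫⁻ x in Qz s z, g x y)
      ≤ ∑ z ∈ I, ∫⁻ x in Qz s z, ∫⁻ h in Hset s, g x (x + h) :=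
        Finset.sum_le_sum hcube
    _ = ∫⁻ x in ⋃ z ∈ I, Qz s z, ∫⁻ h in Hset s, g x (x + h) :=
        (lintegral_biUnion_finset
          ((Qz_disjoint (n := n) s).pairwiseDisjoint (I : Set (Fin n → ℤ)))
          (fun z _ => Qz_measurableSet s z) _).symm
    _ ≤ ∫⁻ x, ∫⁻ h in Hset s, g x (x + h) := setLIntegral_le_lintegral _ _
    _ = ∫⁻ h in Hset s, ∫⁻ x, g x (x + h) :=
        lintegral_lintegral_swap (hgmeas2.aemeasurable)
    _ ≤ ∫⁻ _h in Hset s, ε₂ := by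
        apply lintegral_mono_ae
        rw [ae_restrict_iff' (Hset_measurableSet s)]
        apply ae_of_all
        intro h hh
        have hnorm : ‖h‖ < δ := hsδ h hh
        have heq : (∫⁻ x, g x (x + h)) = ∫⁻ x, ENNReal.ofReal (|f' (x+h) - f' x| ^ p * w' x) := by
          apply lintegral_congr
          intro x
          rw [hg]
          simp only
          rw [abs_sub_comm]
        rw [heq]
        exact hE h hnorm
    _ = ε₂ * volume (Hset (n := n) s) := setLIntegral_const _ _
    _ = (2 : ℝ≥0∞) ^ n * ENNReal.ofReal s ^ n * ε₂ := by
        rw [volume_Hset s hs, mul_comm]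


lemma exists_w' (w : En n → ℝ) (hw0 : ∀ x, 0 ≤ w x)
    (hmeas : AEStronglyMeasurable w volume) :
    ∃ w' : En n → ℝ, Measurable w' ∧ (∀ x, 0 ≤ w' x) ∧ w =ᵐ[volume] w' := by
  refine ⟨fun x => max (hmeas.aemeasurable.mk w x) 0,
    (hmeas.aemeasurable.measurable_mk.max measurable_const), fun x => le_max_right _ _, ?_⟩
  filter_upwards [hmeas.aemeasurable.ae_eq_mk] with x hx
  show w x = max (hmeas.aemeasurable.mk w x) 0
  rw [← hx, max_eq_left (hw0 x)]

set_option maxHeartbeats 4000000 in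
lemma tb (p : ℝ) (hp : 0 < p) (w : En n → ℝ) (hw0 : ∀ x, 0 ≤ w x)
    (hw : LocallyIntegrable w volume) (F : Set (En n → ℝ))
    (hFmeas : ∀ f ∈ F, AEStronglyMeasurable f volume) (B : ℝ)
    (hB : ∀ f ∈ F, (∫⁻ x, ENNReal.ofReal (|f x| ^ p * w x)) ≤ ENNReal.ofReal B)
    (ε : ℝ≥0∞) (hε0 : ε ≠ 0) (hεtop : ε ≠ ⊤)
    (N δ : ℝ) (hδ0 : 0 < δ)
    (hN : ∀ f ∈ F, (∫⁻ x in {x : En n | N < ‖x‖}, ENNReal.ofReal (|f x| ^ p * w x)) ≤ ε / 4)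
    (hequi : ∀ h : En n, ‖h‖ < δ → ∀ f ∈ F,
      (∫⁻ x, ENNReal.ofReal (|f (x + h) - f x| ^ p * w x)) ≤
        (ε / 4) / (ENNReal.ofReal (2 ^ p) * 2 ^ (n + 1))) :
    ∃ G : Set (En n → ℝ), G.Finite ∧ (∀ g ∈ G, Measurable g) ∧
      ∀ f ∈ F, ∃ g ∈ G, (∫⁻ x, ENNReal.ofReal (|f x - g x| ^ p * w x)) ≤ ε := by
  classical
  obtain ⟨w', hw'meas, hw'0, hww'⟩ := exists_w' w hw0 hw.aestronglyMeasurable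
  set P : ℝ≥0∞ := ENNReal.ofReal (2 ^ p) with hP
  have hP0 : P ≠ 0 := by
    simp only [hP, ne_eq, ENNReal.ofReal_eq_zero, not_le]
    positivity
  have hPtop : P ≠ ⊤ := ENNReal.ofReal_ne_top
  set ε₂ : ℝ≥0∞ := (ε / 4) / (P * 2 ^ (n + 1)) with hε₂
  have hε4 : ε / 4 ≠ 0 := by
    simp only [ne_eq, ENNReal.div_eq_zero_iff, not_or]
    exact ⟨hε0, by norm_num⟩
  have hε4top : ε / 4 ≠ ⊤ := (ENNReal.div_lt_top hεtop (by norm_num)).ne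
  have hε₂0 : ε₂ ≠ 0 := (ENNReal.div_pos hε4
    (ENNReal.mul_ne_top hPtop (by simp))).ne'
  have hε₂top : ε₂ ≠ ⊤ := (ENNReal.div_lt_top hε4top
    (by simp [hP0])).ne
  -- grid size
  set s : ℝ := δ / (n + 1) with hsdef
  have hs : 0 < s := by positivity
  have hHδ : ∀ h : En n, h ∈ Hset s → ‖h‖ < δ := by
    intro h hh
    have h2 : ‖h‖ ≤ n * s := norm_le_of_coord hs.le (fun i => (hh i).le)
    have hlt : (n : ℝ) * s < δ := by
      rw [hsdef]
      have h3 : (n : ℝ) / (n + 1) < 1 := by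
        rw [div_lt_one (by positivity)]; linarith
      calc (n:ℝ) * (δ / (n+1)) = ((n:ℝ)/(n+1)) * δ := by ring
        _ < 1 * δ := mul_lt_mul_of_pos_right h3 hδ0
        _ = δ := one_mul δ
    linarith
  set N₀ : ℝ := max N 0 with hN₀
  set M : ℕ := ⌈N₀ / s⌉₊ with hM
  set I : Finset (Fin n → ℤ) := Fintype.piFinset fun _ : Fin n => Finset.Icc (-(M:ℤ)) (M:ℤ)
    with hI
  have hIne : (0 : Fin n → ℤ) ∈ I := by
    rw [hI, Fintype.mem_piFinset]
    intro i
    simp only [Pi.zero_apply, Finset.mem_Icc]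
    omega
  have hm0 : (I.card : ℝ≥0∞) ≠ 0 := by
    simp only [ne_eq, Nat.cast_eq_zero, Finset.card_eq_zero]
    intro h
    rw [h] at hIne
    simp at hIne
  have hmtop : (I.card : ℝ≥0∞) ≠ ⊤ := ENNReal.natCast_ne_top _
  have hMs : N₀ ≤ M * s := by
    have := Nat.le_ceil (N₀ / s)
    rw [div_le_iff₀ hs] at this
    exact this
  -- covering property
  have hcov : ∀ x : En n, ‖x‖ ≤ N → zfun s x ∈ I := by
    intro x hx
    rw [hI, Fintype.mem_piFinset]
    intro i
    have hxi : |x i| ≤ N₀ := le_trans (abs_coord_le_norm x i) (le_trans hx (le_max_left _ _))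
    have hup : x i ≤ (M:ℝ) * s := le_trans (abs_le.1 hxi).2 hMs
    have hlow : -((M:ℝ) * s) ≤ x i := by
      have := (abs_le.1 hxi).1; have h2 : -N₀ ≤ x i := this; linarith
    simp only [Finset.mem_Icc, zfun]
    constructor
    · apply Int.le_floor.2
      push_cast
      rw [le_div_iff₀ hs]
      linarith
    · have h3 : x i / s ≤ ((M:ℤ):ℝ) := by
        push_cast
        rw [div_le_iff₀ hs]
        linarith
      calc ⌊x i / s⌋ ≤ ⌊((M:ℤ):ℝ)⌋ := Int.floor_le_floor h3
        _ = (M:ℤ) := Int.floor_intCast _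
  -- finiteness of the weight on cubes
  set R : ℝ := n * ((M + 1) * s) with hR
  have hQsub : ∀ z ∈ I, Qz s z ⊆ Metric.closedBall (0 : En n) R := by
    intro z hz x hx
    rw [Metric.mem_closedBall, dist_zero_right]
    apply norm_le_of_coord (by positivity)
    intro i
    have h1 := (mem_Qz_iff hs).1 hx i
    have hzi : |(z i : ℝ)| ≤ (M : ℝ) := by
      rw [hI, Fintype.mem_piFinset] at hz
      have := hz i
      rw [Finset.mem_Icc] at this
      push_cast [abs_le]
      constructor <;> [exact_mod_cast this.1; exact_mod_cast this.2]
    rw [abs_le]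
    have h2 := abs_le.1 hzi
    constructor
    · nlinarith [h1.1, h2.1, hs.le]
    · nlinarith [h1.2, h2.2, hs.le]
  have hwR : (∫⁻ x in Metric.closedBall (0:En n) R, ENNReal.ofReal (w x)) ≠ ⊤ := by
    have hint : IntegrableOn w (Metric.closedBall 0 R) volume :=
      hw.integrableOn_isCompact (isCompact_closedBall _ _)
    refine ne_of_lt (lt_of_le_of_lt ?_ hint.hasFiniteIntegral)
    apply lintegral_mono
    exact fun x => le_of_eq (Real.enorm_eq_ofReal (hw0 x)).symm
  set wbar : (Fin n → ℤ) → ℝ≥0∞ := fun z => ∫⁻ x in Qz s z, ENNReal.ofReal (w' x) with hwbar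
  have hwbar_eq : ∀ z, wbar z = ∫⁻ x in Qz s z, ENNReal.ofReal (w x) := by
    intro z
    apply lintegral_congr_ae
    exact ae_restrict_of_ae (hww'.mono fun x hx => congrArg ENNReal.ofReal hx.symm)
  have hwbar_top : ∀ z ∈ I, wbar z ≠ ⊤ := by
    intro z hz
    rw [hwbar_eq z]
    exact ne_top_of_le_ne_top hwR (lintegral_mono_set (hQsub z hz))
  set Wt : ℝ≥0∞ := ∑ z ∈ I, wbar z with hWt
  have hWttop : Wt ≠ ⊤ := by
    rw [hWt]
    exact (ENNReal.sum_lt_top.2 fun z hz => lt_top_iff_ne_top.2 (hwbar_top z hz)).ne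
  set ε₃ : ℝ≥0∞ := ((ε / 4) / P) / I.card with hε₃
  have hεP0 : (ε / 4) / P ≠ 0 := (ENNReal.div_pos hε4 hPtop).ne'
  have hεPtop : (ε / 4) / P ≠ ⊤ := (ENNReal.div_lt_top hε4top hP0).ne
  have hε₃0 : ε₃ ≠ 0 := (ENNReal.div_pos hεP0 hmtop).ne'
  have hε₃top : ε₃ ≠ ⊤ := (ENNReal.div_lt_top hεPtop hm0).ne
  set B₂ : ℝ≥0∞ := P * (2 ^ (n + 1) * ε₂ + ε₃ + ENNReal.ofReal B) with hB₂
  have hB₂top : B₂ ≠ ⊤ := by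
    apply ENNReal.mul_ne_top hPtop
    apply ENNReal.add_ne_top.2
    exact ⟨ENNReal.add_ne_top.2 ⟨ENNReal.mul_ne_top (by simp) hε₂top, hε₃top⟩,
      ENNReal.ofReal_ne_top⟩
  set K : (Fin n → ℤ) → ℝ := fun z => ((B₂ / wbar z).toReal) ^ (1/p) with hK
  have hK0 : ∀ z, 0 ≤ K z := fun z => Real.rpow_nonneg ENNReal.toReal_nonneg _
  -- choice of η
  obtain ⟨η, hη0, hηb⟩ : ∃ η : ℝ, 0 < η ∧ ENNReal.ofReal (η ^ p) * Wt ≤ (ε/4)/P := by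
    rcases eq_or_ne Wt 0 with hW0 | hWne
    · exact ⟨1, one_pos, by simp [hW0]⟩
    · have hYpos : (0:ℝ≥0∞) < (ε/4)/P/Wt := ENNReal.div_pos hεP0 hWttop
      have hYtop : (ε/4)/P/Wt ≠ ⊤ := (ENNReal.div_lt_top hεPtop hWne).ne
      set ρ : ℝ := min 1 (((ε/4)/P/Wt).toReal) with hρ
      have hρ0 : 0 < ρ := lt_min one_pos (ENNReal.toReal_pos hYpos.ne' hYtop)
      refine ⟨ρ ^ (1/p), Real.rpow_pos_of_pos hρ0 _, ?_⟩
      have hηp : (ρ ^ (1/p)) ^ p = ρ := by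
        rw [← Real.rpow_mul hρ0.le, one_div, inv_mul_cancel₀ hp.ne', Real.rpow_one]
      rw [hηp]
      calc ENNReal.ofReal ρ * Wt ≤ ((ε/4)/P/Wt) * Wt := by
            apply mul_le_mul_left
            calc ENNReal.ofReal ρ ≤ ENNReal.ofReal (((ε/4)/P/Wt).toReal) :=
                  ENNReal.ofReal_le_ofReal (min_le_right _ _)
              _ = (ε/4)/P/Wt := ENNReal.ofReal_toReal hYtop
        _ ≤ (ε/4)/P := by rw [mul_comm]; exact ENNReal.mul_div_le
  set L : (Fin n → ℤ) → ℤ := fun z => ⌈K z / η⌉ + 1 with hL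
  have hL0 : ∀ z, 0 ≤ L z := by
    intro z
    have h1 : (0:ℤ) ≤ ⌈K z / η⌉ := Int.ceil_nonneg (by positivity)
    simp only [hL]
    omega
  set Gs : (Fin n → ℤ) → Set ℝ := fun z =>
    if z ∈ I then (fun k : ℤ => η * k) '' (Set.Icc (-(L z)) (L z)) else {0} with hGs
  have hGsfin : ∀ z, (Gs z).Finite := by
    intro z
    simp only [hGs]
    split_ifs
    · exact (Set.finite_Icc _ _).image _
    · exact Set.finite_singleton _
  have h0Gs : ∀ z, (0:ℝ) ∈ Gs z := by
    intro z
    simp only [hGs]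
    split_ifs
    · exact ⟨0, by simp only [Set.mem_Icc]; constructor <;> [linarith [hL0 z]; exact hL0 z], by simp⟩
    · rfl
  set St : ((Fin n → ℤ) → ℝ) → En n → ℝ :=
    fun d x => if zfun s x ∈ I then d (zfun s x) else 0 with hSt
  have hStmeas : ∀ d, Measurable (St d) :=
    fun d => (measurable_of_countable (fun z => if z ∈ I then d z else 0)).comp
      (zfun_measurable s)
  set D : Set ((Fin n → ℤ) → ℝ) := {d | ∀ z, d z ∈ Gs z} with hD
  have hDfin : D.Finite := by
    apply Set.Finite.of_finite_image (f := fun d => fun z : {z // z ∈ I} => d z.1)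
    · apply Set.Finite.subset
        (Set.Finite.pi (t := fun z : {z // z ∈ I} => Gs z.1) (fun z => hGsfin z.1))
      rintro _ ⟨d, hd, rfl⟩
      intro z _
      exact hd z.1
    · rintro d₁ h₁ d₂ h₂ heq
      funext z
      by_cases hz : z ∈ I
      · exact congrFun heq ⟨z, hz⟩
      · have e₁ := h₁ z
        have e₂ := h₂ z
        rw [hGs] at e₁ e₂
        simp only [if_neg hz, Set.mem_singleton_iff] at e₁ e₂
        rw [e₁, e₂]
  refine ⟨St '' D, hDfin.image _, by rintro g ⟨d, _, rfl⟩; exact hStmeas d, ?_⟩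
  -- ================= main estimate for an individual f =================
  intro f hf
  have hfae := (hFmeas f hf).aemeasurable
  set f' : En n → ℝ := hfae.mk f with hf'
  have hf'meas : Measurable f' := hfae.measurable_mk
  have hff' : f =ᵐ[volume] f' := hfae.ae_eq_mk
  set V : (Fin n → ℤ) → En n → ℝ≥0∞ :=
    fun z y => ∫⁻ x in Qz s z, ENNReal.ofReal (|f' x - f' y| ^ p * w' x) with hV
  set κ : ℝ≥0∞ := ENNReal.ofReal s ^ n with hκ
  have hκ0 : κ ≠ 0 := pow_ne_zero _ (by simp [hs, hs.le])
  have hκtop : κ ≠ ⊤ := by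
    rw [hκ]
    exact ENNReal.pow_ne_top ENNReal.ofReal_ne_top
  have hEf : ∀ h : En n, ‖h‖ < δ →
      (∫⁻ x, ENNReal.ofReal (|f' (x + h) - f' x| ^ p * w' x)) ≤ ε₂ := by
    intro h hh
    have hshift : (fun x => f (x + h)) =ᵐ[volume] (fun x => f' (x + h)) :=
      (measurePreserving_add_right volume h).quasiMeasurePreserving.ae_eq_comp hff'
    have heq : (fun x => ENNReal.ofReal (|f' (x + h) - f' x| ^ p * w' x))
        =ᵐ[volume] (fun x => ENNReal.ofReal (|f (x + h) - f x| ^ p * w x)) := by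
      filter_upwards [hff', hww', hshift] with x e1 e2 e3
      rw [← e1, ← e2, ← e3]
    rw [lintegral_congr_ae heq]
    exact hequi h hh f hf
  have hsumX : ∑ z ∈ I, (∫⁻ y in Qz s z, V z y) ≤ 2^n * κ * ε₂ :=
    claimA p hp w' hw'meas f' hf'meas s δ hs hHδ I ε₂ hEf
  set A : (Fin n → ℤ) → ℝ≥0∞ := fun z => κ⁻¹ * ∫⁻ y in Qz s z, V z y with hA
  have hsumA : ∑ z ∈ I, A z ≤ 2^n * ε₂ := by
    rw [hA, ← Finset.mul_sum]
    calc κ⁻¹ * ∑ z ∈ I, (∫⁻ y in Qz s z, V z y) ≤ κ⁻¹ * (2^n * κ * ε₂) :=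
          mul_le_mul_right hsumX _
      _ = (κ⁻¹ * κ) * (2^n * ε₂) := by ring
      _ = 2^n * ε₂ := by rw [ENNReal.inv_mul_cancel hκ0 hκtop, one_mul]
  have hchoice : ∀ z ∈ I, ∃ y, V z y ≤ 2 * A z + ε₃ := by
    intro z hz
    rcases eq_or_ne (A z) ⊤ with hAtop | hAtop
    · have : 2 * A z + ε₃ = ⊤ := by rw [hAtop]; simp
      exact ⟨0, this ▸ le_top⟩
    · by_contra hcon
      push_neg at hcon
      have hXz : (∫⁻ y in Qz s z, V z y) = κ * A z := by
        rw [hA, ← mul_assoc, ENNReal.mul_inv_cancel hκ0 hκtop, one_mul]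
      have hge : (2 * A z + ε₃) * κ ≤ κ * A z := by
        rw [← hXz]
        calc (2 * A z + ε₃) * κ = ∫⁻ _y in Qz s z, (2 * A z + ε₃) := by
              rw [setLIntegral_const, volume_Qz s hs, hκ]
          _ ≤ ∫⁻ y in Qz s z, V z y := lintegral_mono (fun y => (hcon y).le)
      have h1 : A z * κ + (A z * κ + ε₃ * κ) ≤ A z * κ + 0 := by
        calc A z * κ + (A z * κ + ε₃ * κ) = (2 * A z + ε₃) * κ := by ring
          _ ≤ κ * A z := hge
          _ = A z * κ + 0 := by rw [add_zero, mul_comm]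
      have h2 : A z * κ + ε₃ * κ ≤ 0 :=
        (ENNReal.add_le_add_iff_left (ENNReal.mul_ne_top hAtop hκtop)).1 h1
      have h3 : ε₃ * κ = 0 := le_antisymm (le_trans le_add_self h2) zero_le
      rw [mul_eq_zero] at h3
      tauto
  choose! ych hych using hchoice
  set c : (Fin n → ℤ) → ℝ := fun z => f' (ych z) with hc
  have hAle : ∀ z ∈ I, A z ≤ 2^n * ε₂ :=
    fun z hz => le_trans (Finset.single_le_sum (f := A) (fun _ _ => zero_le) hz) hsumA
  have hVle : ∀ z ∈ I, V z (ych z) ≤ 2^(n+1) * ε₂ + ε₃ := by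
    intro z hz
    refine le_trans (hych z hz) ?_
    have h1 := hAle z hz
    calc 2 * A z + ε₃ ≤ 2 * (2^n * ε₂) + ε₃ := by gcongr
      _ = 2^(n+1) * ε₂ + ε₃ := by ring
  -- bound the values c z
  have hcb : ∀ z ∈ I, ENNReal.ofReal (|c z| ^ p) * wbar z ≤ B₂ := by
    intro z hz
    have hpt : ∀ x, ENNReal.ofReal (|c z| ^ p) * ENNReal.ofReal (w' x) ≤
        P * (ENNReal.ofReal (|f' x - c z| ^ p * w' x)
          + ENNReal.ofReal (|f' x| ^ p * w' x)) := by
      intro x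
      have h2 := abs_rpow_quasi p hp (c z) (f' x) 0
      simp only [sub_zero] at h2
      have h1 : |c z| ^ p * w' x ≤
          2 ^ p * (|f' x - c z| ^ p * w' x + |f' x| ^ p * w' x) := by
        have h4 : |c z - f' x| = |f' x - c z| := abs_sub_comm _ _
        rw [h4] at h2
        have h5 := hw'0 x
        nlinarith [Real.rpow_nonneg (abs_nonneg (c z)) p,
          Real.rpow_nonneg (abs_nonneg (f' x - c z)) p,
          Real.rpow_nonneg (abs_nonneg (f' x)) p,
          Real.rpow_nonneg (abs_nonneg (c z - f' x)) p]
      calc ENNReal.ofReal (|c z| ^ p) * ENNReal.ofReal (w' x)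
          = ENNReal.ofReal (|c z| ^ p * w' x) :=
            (ENNReal.ofReal_mul (Real.rpow_nonneg (abs_nonneg _) _)).symm
        _ ≤ ENNReal.ofReal (2 ^ p * (|f' x - c z| ^ p * w' x + |f' x| ^ p * w' x)) :=
            ENNReal.ofReal_le_ofReal h1
        _ = P * (ENNReal.ofReal (|f' x - c z| ^ p * w' x)
              + ENNReal.ofReal (|f' x| ^ p * w' x)) := by
            rw [ENNReal.ofReal_mul (Real.rpow_nonneg (by norm_num) p),
              ENNReal.ofReal_add
                (mul_nonneg (Real.rpow_nonneg (abs_nonneg _) _) (hw'0 x))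
                (mul_nonneg (Real.rpow_nonneg (abs_nonneg _) _) (hw'0 x))]
    have hmeas1 : Measurable (fun x => ENNReal.ofReal (|f' x - c z| ^ p * w' x)) :=
      (((Real.continuous_rpow_const hp.le).measurable.comp
        (hf'meas.sub measurable_const).abs).mul hw'meas).ennreal_ofReal
    calc ENNReal.ofReal (|c z| ^ p) * wbar z
        = ∫⁻ x in Qz s z, ENNReal.ofReal (|c z| ^ p) * ENNReal.ofReal (w' x) :=
          (lintegral_const_mul' _ _ ENNReal.ofReal_ne_top).symm
      _ ≤ ∫⁻ x in Qz s z, P * (ENNReal.ofReal (|f' x - c z| ^ p * w' x)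
            + ENNReal.ofReal (|f' x| ^ p * w' x)) := lintegral_mono (fun x => hpt x)
      _ = P * ((∫⁻ x in Qz s z, ENNReal.ofReal (|f' x - c z| ^ p * w' x))
            + ∫⁻ x in Qz s z, ENNReal.ofReal (|f' x| ^ p * w' x)) := by
          rw [lintegral_const_mul' _ _ hPtop, lintegral_add_left' hmeas1.aemeasurable]
      _ ≤ P * ((2^(n+1) * ε₂ + ε₃) + ENNReal.ofReal B) := by
          gcongr
          · exact hVle z hz
          · calc (∫⁻ x in Qz s z, ENNReal.ofReal (|f' x| ^ p * w' x))
                ≤ ∫⁻ x, ENNReal.ofReal (|f' x| ^ p * w' x) := setLIntegral_le_lintegral _ _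
              _ = ∫⁻ x, ENNReal.ofReal (|f x| ^ p * w x) := by
                  apply lintegral_congr_ae
                  filter_upwards [hff', hww'] with x e1 e2
                  rw [← e1, ← e2]
              _ ≤ ENNReal.ofReal B := hB f hf
      _ = B₂ := by rw [hB₂]
  have hKb : ∀ z ∈ I, wbar z ≠ 0 → |c z| ≤ K z := by
    intro z hz hwz
    have h1 : ENNReal.ofReal (|c z| ^ p) ≤ B₂ / wbar z := by
      rw [ENNReal.le_div_iff_mul_le (Or.inl hwz) (Or.inl (hwbar_top z hz))]
      exact hcb z hz
    have h2 : |c z| ^ p ≤ (B₂ / wbar z).toReal := by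
      have h3 : B₂ / wbar z ≠ ⊤ := by
        rw [ne_eq, ENNReal.div_eq_top]
        push_neg
        exact ⟨fun _ => hwz, fun h => absurd h hB₂top⟩
      calc |c z| ^ p = (ENNReal.ofReal (|c z| ^ p)).toReal :=
            (ENNReal.toReal_ofReal (Real.rpow_nonneg (abs_nonneg _) _)).symm
        _ ≤ (B₂ / wbar z).toReal := ENNReal.toReal_mono h3 h1
    calc |c z| = (|c z| ^ p) ^ (1/p) := by
          rw [← Real.rpow_mul (abs_nonneg _), mul_one_div, div_self hp.ne',
            Real.rpow_one]
      _ ≤ ((B₂ / wbar z).toReal) ^ (1/p) :=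
          Real.rpow_le_rpow (Real.rpow_nonneg (abs_nonneg _) _) h2 (by positivity)
      _ = K z := by rw [hK]
  set chat : (Fin n → ℤ) → ℝ := fun z =>
    if z ∈ I then (if wbar z = 0 then 0 else η * ⌊c z / η⌋) else 0 with hchat
  have hchatD : chat ∈ D := by
    intro z
    rw [hchat]
    simp only
    by_cases hz : z ∈ I
    · rw [if_pos hz]
      by_cases hwz : wbar z = 0
      · rw [if_pos hwz]; exact h0Gs z
      · rw [if_neg hwz, hGs]
        simp only [if_pos hz]
        refine ⟨⌊c z / η⌋, ?_, rfl⟩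
        have hcle := abs_le.1 (hKb z hz hwz)
        have hd1 : -(K z) / η ≤ c z / η := by gcongr; exact hcle.1
        have hd2 : c z / η ≤ K z / η := by gcongr; exact hcle.2
        have hceil := Int.le_ceil (K z / η)
        rw [Set.mem_Icc, hL]
        constructor
        · apply Int.le_floor.2
          push_cast
          rw [neg_div] at hd1
          linarith
        · calc ⌊c z / η⌋ ≤ ⌊K z / η⌋ := Int.floor_le_floor hd2
            _ ≤ ⌈K z / η⌉ := Int.floor_le_ceil _
            _ ≤ ⌈K z / η⌉ + 1 := by omega
    · rw [if_neg hz]; exact h0Gs z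
  have hnear : ∀ z ∈ I, wbar z ≠ 0 → |c z - chat z| ≤ η := by
    intro z hz hwz
    rw [hchat]
    simp only [if_pos hz, if_neg hwz]
    have heq : c z - η * ⌊c z / η⌋ = η * Int.fract (c z / η) := by
      rw [Int.fract]
      field_simp
    rw [heq, abs_of_nonneg (mul_nonneg hη0.le (Int.fract_nonneg _))]
    calc η * Int.fract (c z / η) ≤ η * 1 := by
          exact mul_le_mul_of_nonneg_left (Int.fract_lt_one _).le hη0.le
      _ = η := mul_one η
  -- the chosen net element
  refine ⟨St chat, Set.mem_image_of_mem _ hchatD, ?_⟩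
  set U : Set (En n) := ⋃ z ∈ I, Qz s z with hU
  have hUmeas : MeasurableSet U :=
    MeasurableSet.biUnion I.countable_toSet (fun z _ => Qz_measurableSet s z)
  have hmemU : ∀ x : En n, x ∈ U ↔ zfun s x ∈ I := by
    intro x
    rw [hU]
    simp only [Set.mem_iUnion]
    constructor
    · rintro ⟨z, hz, hx⟩
      have hzz : zfun s x = z := hx
      rw [hzz]; exact hz
    · intro h
      exact ⟨zfun s x, h, rfl⟩
  have hsplit : (∫⁻ x, ENNReal.ofReal (|f x - St chat x| ^ p * w x)) =
      (∫⁻ x in U, ENNReal.ofReal (|f x - St chat x| ^ p * w x))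
      + ∫⁻ x in Uᶜ, ENNReal.ofReal (|f x - St chat x| ^ p * w x) :=
    (lintegral_add_compl _ hUmeas).symm
  -- tail part
  have htail : (∫⁻ x in Uᶜ, ENNReal.ofReal (|f x - St chat x| ^ p * w x)) ≤ ε / 4 := by
    have heq : (∫⁻ x in Uᶜ, ENNReal.ofReal (|f x - St chat x| ^ p * w x))
        = ∫⁻ x in Uᶜ, ENNReal.ofReal (|f x| ^ p * w x) := by
      apply setLIntegral_congr_fun hUmeas.compl
      intro x hx
      have hnot : zfun s x ∉ I := fun h => hx ((hmemU x).2 h)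
      have hzero : St chat x = 0 := by rw [hSt]; simp only [if_neg hnot]
      beta_reduce; rw [hzero, sub_zero]
    rw [heq]
    refine le_trans (lintegral_mono_set ?_) (hN f hf)
    intro x hx
    simp only [Set.mem_setOf_eq]
    by_contra hle
    push_neg at hle
    exact hx ((hmemU x).2 (hcov x hle))
  -- main part over the cubes
  have hperz : ∀ z ∈ I, (∫⁻ x in Qz s z, ENNReal.ofReal (|f x - St chat x| ^ p * w x))
      ≤ P * (V z (ych z) + ENNReal.ofReal (|c z - chat z| ^ p) * wbar z) := by
    intro z hz
    have hst : (∫⁻ x in Qz s z, ENNReal.ofReal (|f x - St chat x| ^ p * w x))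
        = ∫⁻ x in Qz s z, ENNReal.ofReal (|f' x - chat z| ^ p * w' x) := by
      have h1 : (∫⁻ x in Qz s z, ENNReal.ofReal (|f x - St chat x| ^ p * w x))
          = ∫⁻ x in Qz s z, ENNReal.ofReal (|f x - chat z| ^ p * w x) := by
        apply setLIntegral_congr_fun (Qz_measurableSet s z)
        intro x hx
        have hzf : zfun s x = z := hx
        have hstv : St chat x = chat z := by
          rw [hSt]
          simp only
          rw [hzf, if_pos hz]
        beta_reduce; rw [hstv]
      have h2 : (∫⁻ x in Qz s z, ENNReal.ofReal (|f x - chat z| ^ p * w x))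
          = ∫⁻ x in Qz s z, ENNReal.ofReal (|f' x - chat z| ^ p * w' x) := by
        apply lintegral_congr_ae
        apply ae_restrict_of_ae
        filter_upwards [hff', hww'] with x e1 e2
        rw [e1, e2]
      rw [h1, h2]
    rw [hst]
    have hpt : ∀ x, ENNReal.ofReal (|f' x - chat z| ^ p * w' x) ≤
        P * (ENNReal.ofReal (|f' x - c z| ^ p * w' x)
          + ENNReal.ofReal (|c z - chat z| ^ p * w' x)) := by
      intro x
      have h1 := abs_rpow_quasi p hp (f' x) (c z) (chat z)
      have h2 : |f' x - chat z| ^ p * w' x ≤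
          2 ^ p * (|f' x - c z| ^ p * w' x + |c z - chat z| ^ p * w' x) := by
        have h5 := hw'0 x
        nlinarith [Real.rpow_nonneg (abs_nonneg (f' x - chat z)) p,
          Real.rpow_nonneg (abs_nonneg (f' x - c z)) p,
          Real.rpow_nonneg (abs_nonneg (c z - chat z)) p]
      calc ENNReal.ofReal (|f' x - chat z| ^ p * w' x)
          ≤ ENNReal.ofReal (2 ^ p * (|f' x - c z| ^ p * w' x
              + |c z - chat z| ^ p * w' x)) := ENNReal.ofReal_le_ofReal h2
        _ = P * (ENNReal.ofReal (|f' x - c z| ^ p * w' x)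
              + ENNReal.ofReal (|c z - chat z| ^ p * w' x)) := by
            rw [ENNReal.ofReal_mul (Real.rpow_nonneg (by norm_num) p),
              ENNReal.ofReal_add
                (mul_nonneg (Real.rpow_nonneg (abs_nonneg _) _) (hw'0 x))
                (mul_nonneg (Real.rpow_nonneg (abs_nonneg _) _) (hw'0 x))]
    have hmeas1 : Measurable (fun x => ENNReal.ofReal (|f' x - c z| ^ p * w' x)) :=
      (((Real.continuous_rpow_const hp.le).measurable.comp
        (hf'meas.sub measurable_const).abs).mul hw'meas).ennreal_ofReal
    calc (∫⁻ x in Qz s z, ENNReal.ofReal (|f' x - chat z| ^ p * w' x))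
        ≤ ∫⁻ x in Qz s z, P * (ENNReal.ofReal (|f' x - c z| ^ p * w' x)
            + ENNReal.ofReal (|c z - chat z| ^ p * w' x)) := lintegral_mono hpt
      _ = P * ((∫⁻ x in Qz s z, ENNReal.ofReal (|f' x - c z| ^ p * w' x))
            + ∫⁻ x in Qz s z, ENNReal.ofReal (|c z - chat z| ^ p * w' x)) := by
          rw [lintegral_const_mul' _ _ hPtop, lintegral_add_left' hmeas1.aemeasurable]
      _ = P * (V z (ych z) + ENNReal.ofReal (|c z - chat z| ^ p) * wbar z) := by
          have e1 : (∫⁻ x in Qz s z, ENNReal.ofReal (|f' x - c z| ^ p * w' x))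
              = V z (ych z) := by
            simp only [hV, hc]
          have e2 : (∫⁻ x in Qz s z, ENNReal.ofReal (|c z - chat z| ^ p * w' x))
              = ENNReal.ofReal (|c z - chat z| ^ p) * wbar z := by
            rw [← lintegral_const_mul' _ _ ENNReal.ofReal_ne_top]
            apply lintegral_congr
            intro x
            rw [ENNReal.ofReal_mul (Real.rpow_nonneg (abs_nonneg _) _)]
          rw [e1, e2]
  have hsumV : ∑ z ∈ I, V z (ych z) ≤ 2^(n+1) * ε₂ + I.card * ε₃ := by
    calc ∑ z ∈ I, V z (ych z) ≤ ∑ z ∈ I, (2 * A z + ε₃) :=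
          Finset.sum_le_sum (fun z hz => hych z hz)
      _ = 2 * (∑ z ∈ I, A z) + I.card * ε₃ := by
          rw [Finset.sum_add_distrib, ← Finset.mul_sum, Finset.sum_const, nsmul_eq_mul]
      _ ≤ 2 * (2^n * ε₂) + I.card * ε₃ := by gcongr
      _ = 2^(n+1) * ε₂ + I.card * ε₃ := by ring
  have hsumT : ∑ z ∈ I, ENNReal.ofReal (|c z - chat z| ^ p) * wbar z
      ≤ ENNReal.ofReal (η ^ p) * Wt := by
    rw [hWt, Finset.mul_sum]
    apply Finset.sum_le_sum
    intro z hz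
    by_cases hwz : wbar z = 0
    · rw [hwz]; simp
    · apply mul_le_mul_left
      apply ENNReal.ofReal_le_ofReal
      apply Real.rpow_le_rpow (abs_nonneg _) (hnear z hz hwz) hp.le
  have hUpart : (∫⁻ x in U, ENNReal.ofReal (|f x - St chat x| ^ p * w x))
      ≤ ε / 4 + (ε / 4 + ε / 4) := by
    rw [hU, lintegral_biUnion_finset
      ((Qz_disjoint (n := n) s).pairwiseDisjoint (I : Set (Fin n → ℤ)))
      (fun z _ => Qz_measurableSet s z)]
    calc ∑ z ∈ I, (∫⁻ x in Qz s z, ENNReal.ofReal (|f x - St chat x| ^ p * w x))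
        ≤ ∑ z ∈ I, P * (V z (ych z) + ENNReal.ofReal (|c z - chat z| ^ p) * wbar z) :=
          Finset.sum_le_sum hperz
      _ = P * ((∑ z ∈ I, V z (ych z))
            + ∑ z ∈ I, ENNReal.ofReal (|c z - chat z| ^ p) * wbar z) := by
          rw [← Finset.mul_sum, Finset.sum_add_distrib]
      _ ≤ P * ((2^(n+1) * ε₂ + I.card * ε₃) + ENNReal.ofReal (η ^ p) * Wt) :=
          mul_le_mul_right (add_le_add hsumV hsumT) _
      _ = P * (2^(n+1) * ε₂) + (P * (I.card * ε₃) + P * (ENNReal.ofReal (η ^ p) * Wt)) := by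
          ring
      _ ≤ ε / 4 + (ε / 4 + ε / 4) := by
          gcongr
          · rw [← mul_assoc]
            calc (P * 2^(n+1)) * ε₂ = (P * 2^(n+1)) * ((ε/4) / (P * 2^(n+1))) := by
                  rw [hε₂]
              _ ≤ ε / 4 := ENNReal.mul_div_le
          · calc P * ((I.card : ℝ≥0∞) * ε₃) ≤ P * ((ε/4) / P) := by
                  apply mul_le_mul_right
                  rw [hε₃]
                  exact ENNReal.mul_div_le
              _ ≤ ε / 4 := ENNReal.mul_div_le
          · calc P * (ENNReal.ofReal (η ^ p) * Wt) ≤ P * ((ε/4) / P) :=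
                  mul_le_mul_right hηb _
              _ ≤ ε / 4 := ENNReal.mul_div_le
  calc (∫⁻ x, ENNReal.ofReal (|f x - St chat x| ^ p * w x))
      = (∫⁻ x in U, ENNReal.ofReal (|f x - St chat x| ^ p * w x))
        + ∫⁻ x in Uᶜ, ENNReal.ofReal (|f x - St chat x| ^ p * w x) := hsplit
    _ ≤ (ε / 4 + (ε / 4 + ε / 4)) + ε / 4 := add_le_add hUpart htail
    _ = 4 * (ε / 4) := by ring
    _ ≤ ε := ENNReal.mul_div_le


/-- Extraction of a subsequence with geometric pairwise `D`-bounds from a net condition. -/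
lemma extraction {X : Type*} (D : X → X → ℝ≥0∞) (F : Set X) (C : ℝ≥0∞)
    (hsymm : ∀ a b, D a b = D b a)
    (u : ℕ → X) (hu : ∀ k, u k ∈ F)
    (net : ∀ m : ℕ, ∃ G : Set X, G.Finite ∧
      (∀ f ∈ F, ∃ g ∈ G, D f g ≤ (2⁻¹ : ℝ≥0∞) ^ m) ∧
      (∀ g ∈ G, ∀ f₁ ∈ F, ∀ f₂ ∈ F, D f₁ f₂ ≤ C * (D f₁ g + D g f₂))) :
    ∃ φ : ℕ → ℕ, StrictMono φ ∧
      ∀ j k, j ≤ k → D (u (φ j)) (u (φ k)) ≤ 2 * C * (2⁻¹ : ℝ≥0∞) ^ j := by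
  classical
  choose G hGfin hGnet hGtri using net
  -- for each m, the sets {k | D (u k) g ≤ 2⁻¹^m} over g ∈ G m cover ℕ
  have hcover : ∀ m : ℕ, ∃ g ∈ G m, {k : ℕ | D (u k) g ≤ (2⁻¹ : ℝ≥0∞) ^ m} ∈ hyperfilter ℕ := by
    intro m
    have hU : (⋃ g ∈ G m, {k : ℕ | D (u k) g ≤ (2⁻¹ : ℝ≥0∞) ^ m}) ∈ hyperfilter ℕ := by
      have : (⋃ g ∈ G m, {k : ℕ | D (u k) g ≤ (2⁻¹ : ℝ≥0∞) ^ m}) = Set.univ := by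
        ext k; simp only [Set.mem_iUnion, Set.mem_setOf_eq, Set.mem_univ, iff_true]
        simpa using hGnet m (u k) (hu k)
      rw [this]; exact Filter.univ_mem
    exact (Ultrafilter.finite_biUnion_mem_iff (hGfin m)).1 hU
  choose g hgG hgmem using hcover
  set S : ℕ → Set ℕ := fun m => {k : ℕ | D (u k) (g m) ≤ (2⁻¹ : ℝ≥0∞) ^ m} with hS
  set T : ℕ → Set ℕ := fun m => ⋂ j ∈ Finset.range (m + 1), S j with hT
  have hTmem : ∀ m, T m ∈ hyperfilter ℕ := by
    intro m
    exact (Filter.biInter_finset_mem _).2 fun j _ => hgmem j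
  have hTinf : ∀ m, (T m).Infinite := by
    intro m
    by_contra hfin
    rw [Set.not_infinite] at hfin
    exact Filter.notMem_hyperfilter_of_finite (Set.finite_coe_iff.1 hfin) (hTmem m)
  have hTS : ∀ {j m}, j ≤ m → T m ⊆ S j := by
    intro j m hjm
    intro k hk
    simp only [hT, Set.mem_iInter] at hk
    exact hk j (Finset.mem_range.2 (Nat.lt_succ_of_le hjm))
  -- build the subsequence
  let φ : ℕ → ℕ := fun m => Nat.rec ((hTinf 0).nonempty.choose)
    (fun m prev => ((hTinf (m + 1)).exists_gt prev).choose) m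
  have hφ0 : φ 0 ∈ T 0 := (hTinf 0).nonempty.choose_spec
  have hφsucc : ∀ m, φ (m + 1) ∈ T (m + 1) ∧ φ m < φ (m + 1) := by
    intro m
    have h := ((hTinf (m + 1)).exists_gt (φ m)).choose_spec
    exact ⟨h.1, h.2⟩
  have hφT : ∀ m, φ m ∈ T m := by
    intro m; cases m with
    | zero => exact hφ0
    | succ m => exact (hφsucc m).1
  have hmono : StrictMono φ := strictMono_nat_of_lt_succ fun m => (hφsucc m).2
  refine ⟨φ, hmono, ?_⟩
  intro j k hjk
  have h1 : D (u (φ j)) (g j) ≤ (2⁻¹ : ℝ≥0∞) ^ j := hTS le_rfl (hφT j)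
  have h2 : D (u (φ k)) (g j) ≤ (2⁻¹ : ℝ≥0∞) ^ j := hTS hjk (hφT k)
  calc D (u (φ j)) (u (φ k)) ≤ C * (D (u (φ j)) (g j) + D (g j) (u (φ k))) :=
        hGtri j (g j) (hgG j) _ (hu _) _ (hu _)
    _ ≤ C * ((2⁻¹ : ℝ≥0∞) ^ j + (2⁻¹ : ℝ≥0∞) ^ j) := by
        gcongr
        rw [hsymm]; exact h2
    _ = 2 * C * (2⁻¹ : ℝ≥0∞) ^ j := by ring


set_option maxHeartbeats 1000000 in
/-- From a geometrically Cauchy sequence in the weighted `L^p` sense, construct a limit. -/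
lemma lim_of_cauchy (p : ℝ) (hp : 0 < p) (w' : En n → ℝ) (hw'meas : Measurable w')
    (hw'0 : ∀ x, 0 ≤ w' x) (v : ℕ → En n → ℝ) (hv : ∀ k, Measurable (v k))
    (C : ℝ≥0∞) (hC : C ≠ ⊤)
    (hcauchy : ∀ j k, j ≤ k → Dst p w' (v j) (v k) ≤ 2 * C * (2⁻¹ : ℝ≥0∞) ^ j) :
    ∃ f : En n → ℝ, ∀ k, Dst p w' (v k) f ≤ 2 * C * (2⁻¹ : ℝ≥0∞) ^ k := by
  classical
  set μ : Measure (En n) := volume.withDensity (fun x => ENNReal.ofReal (w' x)) with hμ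
  have hdens : Measurable (fun x => ENNReal.ofReal (w' x)) := hw'meas.ennreal_ofReal
  have ha0 : (2⁻¹ : ℝ≥0∞) ≠ 0 := by norm_num
  have hatop : (2⁻¹ : ℝ≥0∞) ≠ ⊤ := by norm_num
  have ha1 : (2⁻¹ : ℝ≥0∞) < 1 := by norm_num
  have hapos : (0:ℝ≥0∞) < 2⁻¹ := by norm_num
  have hrpow_meas : ∀ f g : En n → ℝ, Measurable f → Measurable g →
      Measurable (fun x => |f x - g x| ^ p) := by
    intro f g hf hg
    exact (Real.continuous_rpow_const hp.le).measurable.comp (hf.sub hg).abs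
  have hmeasint : ∀ f g : En n → ℝ, Measurable f → Measurable g →
      Measurable (fun x => ENNReal.ofReal (|f x - g x| ^ p * w' x)) := by
    intro f g hf hg
    exact ((hrpow_meas f g hf hg).mul hw'meas).ennreal_ofReal
  -- the key identity between the two integrals
  have key : ∀ g : En n → ℝ, Measurable g →
      (∫⁻ x, ENNReal.ofReal (|g x| ^ p * w' x)) = ∫⁻ x, ENNReal.ofReal (|g x|) ^ p ∂μ := by
    intro g hg
    have hmeas : Measurable fun x => ENNReal.ofReal (|g x|) ^ p :=
      (hg.abs.ennreal_ofReal).pow_const _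
    rw [hμ, lintegral_withDensity_eq_lintegral_mul volume hdens hmeas]
    apply lintegral_congr
    intro x
    simp only [Pi.mul_apply]
    rw [ENNReal.ofReal_mul (Real.rpow_nonneg (abs_nonneg _) p),
      ← ENNReal.ofReal_rpow_of_nonneg (abs_nonneg _) hp.le, mul_comm]
  have hDg : ∀ j, (∫⁻ x, ENNReal.ofReal (|v (j+1) x - v j x|) ^ p ∂μ)
      ≤ 2 * C * (2⁻¹ : ℝ≥0∞) ^ j := by
    intro j
    rw [← key (fun x => v (j+1) x - v j x) ((hv (j+1)).sub (hv j))]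
    have heq : (fun x => ENNReal.ofReal (|v (j+1) x - v j x| ^ p * w' x)) =
        fun x => ENNReal.ofReal (|v j x - v (j+1) x| ^ p * w' x) := by
      funext x; rw [abs_sub_comm]
    calc (∫⁻ x, ENNReal.ofReal (|v (j+1) x - v j x| ^ p * w' x))
        = Dst p w' (v j) (v (j+1)) := by rw [Dst]; exact congrArg _ heq
      _ ≤ 2 * C * (2⁻¹ : ℝ≥0∞) ^ j := hcauchy j (j+1) (by omega)
  have hτ0 : ∀ j : ℕ, (2⁻¹ : ℝ≥0∞) ^ ((j : ℝ) / (2 * p)) ≠ 0 :=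
    fun j => (ENNReal.rpow_pos hapos hatop).ne'
  have hτtop : ∀ j : ℕ, (2⁻¹ : ℝ≥0∞) ^ ((j : ℝ) / (2 * p)) ≠ ⊤ :=
    fun j => ENNReal.rpow_ne_top_of_nonneg (by positivity) hatop
  have hτp : ∀ j : ℕ, ((2⁻¹ : ℝ≥0∞) ^ ((j : ℝ) / (2 * p))) ^ p
      = (2⁻¹ : ℝ≥0∞) ^ ((j : ℝ) / 2) := by
    intro j
    rw [← ENNReal.rpow_mul]
    congr 1; field_simp
  -- Chebyshev: the measure of the bad sets
  set A : ℕ → Set (En n) :=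
    fun j => {x | (2⁻¹ : ℝ≥0∞) ^ ((j : ℝ) / (2 * p)) ≤ ENNReal.ofReal (|v (j+1) x - v j x|)}
    with hA
  set r : ℝ≥0∞ := (2⁻¹ : ℝ≥0∞) ^ ((1 : ℝ) / 2) with hr
  have hr1 : r < 1 := ENNReal.rpow_lt_one ha1 (by norm_num)
  have hmuA : ∀ j, μ (A j) ≤ 2 * C * r ^ j := by
    intro j
    have hcheb := mul_meas_ge_le_lintegral₀
      (μ := μ) (f := fun x => ENNReal.ofReal (|v (j+1) x - v j x|) ^ p)
      ((((hv (j+1)).sub (hv j)).abs.ennreal_ofReal.pow_const _).aemeasurable)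
      (((2⁻¹ : ℝ≥0∞) ^ ((j : ℝ) / (2 * p))) ^ p)
    have hset : {x | ((2⁻¹ : ℝ≥0∞) ^ ((j : ℝ) / (2 * p))) ^ p
        ≤ ENNReal.ofReal (|v (j+1) x - v j x|) ^ p} = A j := by
      ext x
      simp only [Set.mem_setOf_eq, hA, ENNReal.rpow_le_rpow_iff hp]
    rw [hset] at hcheb
    have h1 : ((2⁻¹ : ℝ≥0∞) ^ ((j : ℝ) / (2 * p))) ^ p * μ (A j)
        ≤ 2 * C * (2⁻¹ : ℝ≥0∞) ^ j := le_trans hcheb (hDg j)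
    rw [hτp j] at h1
    have hne0 : (2⁻¹ : ℝ≥0∞) ^ ((j:ℝ)/2) ≠ 0 := (ENNReal.rpow_pos hapos hatop).ne'
    have hnetop : (2⁻¹ : ℝ≥0∞) ^ ((j:ℝ)/2) ≠ ⊤ :=
      ENNReal.rpow_ne_top_of_nonneg (by positivity) hatop
    have h2 : μ (A j) ≤ ((2⁻¹ : ℝ≥0∞) ^ ((j:ℝ)/2))⁻¹ * (2 * C * (2⁻¹ : ℝ≥0∞) ^ j) := by
      have h3 := mul_le_mul_right h1 ((2⁻¹ : ℝ≥0∞) ^ ((j:ℝ)/2))⁻¹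
      rwa [← mul_assoc, ENNReal.inv_mul_cancel hne0 hnetop, one_mul] at h3
    refine le_trans h2 (le_of_eq ?_)
    have hsplit : (2⁻¹ : ℝ≥0∞) ^ (j : ℕ)
        = (2⁻¹ : ℝ≥0∞) ^ ((j:ℝ)/2) * (2⁻¹ : ℝ≥0∞) ^ ((j:ℝ)/2) := by
      rw [← ENNReal.rpow_natCast (2⁻¹ : ℝ≥0∞) j, ← ENNReal.rpow_add _ _ ha0 hatop]
      congr 1; ring
    have hrj : r ^ (j : ℕ) = (2⁻¹ : ℝ≥0∞) ^ ((j:ℝ)/2) := by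
      rw [hr, ← ENNReal.rpow_natCast, ← ENNReal.rpow_mul]
      congr 1; ring
    rw [hsplit, hrj]
    calc ((2⁻¹:ℝ≥0∞) ^ ((j:ℝ)/2))⁻¹ * (2 * C * ((2⁻¹:ℝ≥0∞) ^ ((j:ℝ)/2) * (2⁻¹:ℝ≥0∞) ^ ((j:ℝ)/2)))
        = (((2⁻¹:ℝ≥0∞) ^ ((j:ℝ)/2))⁻¹ * (2⁻¹:ℝ≥0∞) ^ ((j:ℝ)/2)) * (2 * C * (2⁻¹:ℝ≥0∞) ^ ((j:ℝ)/2)) := by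
          ring
      _ = 2 * C * (2⁻¹:ℝ≥0∞) ^ ((j:ℝ)/2) := by rw [ENNReal.inv_mul_cancel hne0 hnetop, one_mul]
  -- Borel-Cantelli
  have hsum : (∑' j, μ (A j)) ≠ ⊤ := by
    have h1 : (∑' j, μ (A j)) ≤ ∑' j : ℕ, 2 * C * r ^ j := ENNReal.tsum_le_tsum hmuA
    have h2 : (∑' j : ℕ, 2 * C * r ^ j) = 2 * C * (1 - r)⁻¹ := by
      rw [ENNReal.tsum_mul_left, ENNReal.tsum_geometric]
    refine ne_top_of_le_ne_top ?_ h1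
    rw [h2]
    exact ENNReal.mul_ne_top (ENNReal.mul_ne_top (by norm_num) hC)
      (ENNReal.inv_ne_top.2 (by simp [tsub_eq_zero_iff_le, not_le, hr1]))
  have hBC : μ (limsup A atTop) = 0 := measure_limsup_atTop_eq_zero hsum
  have hae1 : ∀ᵐ x ∂μ, x ∉ limsup A atTop := by
    rw [ae_iff]
    simpa using hBC
  -- geometric real bound
  have hρ : ∀ j : ℕ, ((2⁻¹ : ℝ≥0∞) ^ ((j : ℝ) / (2 * p))).toReal
      = ((2⁻¹ : ℝ) ^ ((1:ℝ)/(2*p))) ^ j := by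
    intro j
    rw [← ENNReal.toReal_rpow]
    have h2 : ((2:ℝ≥0∞)⁻¹).toReal = (2⁻¹ : ℝ) := by simp
    rw [h2, ← Real.rpow_natCast ((2⁻¹:ℝ) ^ ((1:ℝ)/(2*p))) j, ← Real.rpow_mul (by norm_num)]
    congr 1; field_simp
  have hρpos : (0:ℝ) < (2⁻¹ : ℝ) ^ ((1:ℝ)/(2*p)) := Real.rpow_pos_of_pos (by norm_num) _
  have hρlt1 : (2⁻¹ : ℝ) ^ ((1:ℝ)/(2*p)) < 1 :=
    Real.rpow_lt_one (by norm_num) (by norm_num) (by positivity)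
  have htend : ∀ᵐ x ∂μ, ∃ L, Tendsto (fun m => v m x) atTop (𝓝 L) := by
    filter_upwards [hae1] with x hx
    have hev : ∃ J, ∀ j, J ≤ j → x ∉ A j := by
      by_contra hcon
      push_neg at hcon
      apply hx
      rw [Filter.mem_limsup_iff_frequently_mem, Filter.frequently_atTop]
      intro J; obtain ⟨j, hJ, hj⟩ := hcon J; exact ⟨j, hJ, hj⟩
    obtain ⟨J, hJ⟩ := hev
    have hbound : ∀ j, J ≤ j → |v (j+1) x - v j x| ≤ ((2⁻¹:ℝ) ^ ((1:ℝ)/(2*p))) ^ j := by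
      intro j hj
      have hx' : ENNReal.ofReal (|v (j+1) x - v j x|)
          < (2⁻¹ : ℝ≥0∞) ^ ((j : ℝ) / (2 * p)) := lt_of_not_ge (hJ j hj)
      have h3 : (ENNReal.ofReal (|v (j+1) x - v j x|)).toReal
          ≤ ((2⁻¹ : ℝ≥0∞) ^ ((j : ℝ) / (2 * p))).toReal :=
        ENNReal.toReal_mono (hτtop j) hx'.le
      rwa [ENNReal.toReal_ofReal (abs_nonneg _), hρ j] at h3
    have hsummable : Summable (fun j => |v (j+1) x - v j x|) := by
      rw [← summable_nat_add_iff J]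
      apply Summable.of_nonneg_of_le (fun j => abs_nonneg _)
        (fun j => hbound (j + J) (by omega))
      exact ((summable_geometric_of_lt_one hρpos.le hρlt1).mul_left
        (((2⁻¹:ℝ) ^ ((1:ℝ)/(2*p))) ^ J)).congr (fun j => by rw [← pow_add]; ring_nf)
    have hcauchyseq : CauchySeq (fun m => v m x) := by
      apply cauchySeq_of_summable_dist
      apply hsummable.congr
      intro j
      rw [Real.dist_eq, abs_sub_comm]
    exact cauchySeq_tendsto_of_complete hcauchyseq
  obtain ⟨f, hfmeas, hftend⟩ := measurable_limit_of_tendsto_metrizable_ae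
    (fun m => (hv m).aemeasurable) htend
  refine ⟨f, fun k => ?_⟩
  have haevol : ∀ᵐ x ∂volume, ENNReal.ofReal (w' x) ≠ 0 →
      Tendsto (fun m => v m x) atTop (𝓝 (f x)) := (ae_withDensity_iff hdens).1 hftend
  have hptae : ∀ᵐ x ∂volume, ENNReal.ofReal (|v k x - f x| ^ p * w' x) =
      liminf (fun m => ENNReal.ofReal (|v k x - v m x| ^ p * w' x)) atTop := by
    filter_upwards [haevol] with x hx
    by_cases hw0 : w' x = 0
    · simp only [hw0, mul_zero, ENNReal.ofReal_zero]
      exact (Filter.Tendsto.liminf_eq tendsto_const_nhds).symm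
    · have hwx : ENNReal.ofReal (w' x) ≠ 0 := by
        simp only [ne_eq, ENNReal.ofReal_eq_zero, not_le]
        exact lt_of_le_of_ne (hw'0 x) (Ne.symm hw0)
      have htx := hx hwx
      symm
      apply Filter.Tendsto.liminf_eq
      have h1 : Tendsto (fun m => |v k x - v m x|) atTop (𝓝 (|v k x - f x|)) :=
        (tendsto_const_nhds.sub htx).abs
      have h2 : Tendsto (fun m => |v k x - v m x| ^ p) atTop (𝓝 (|v k x - f x| ^ p)) :=
        ((Real.continuousAt_rpow_const _ _ (Or.inr hp.le)).tendsto.comp h1)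
      exact (ENNReal.continuous_ofReal.tendsto _).comp (h2.mul_const (w' x))
  calc Dst p w' (v k) f = ∫⁻ x, liminf
        (fun m => ENNReal.ofReal (|v k x - v m x| ^ p * w' x)) atTop :=
        lintegral_congr_ae hptae
    _ ≤ liminf (fun m => ∫⁻ x, ENNReal.ofReal (|v k x - v m x| ^ p * w' x)) atTop :=
        lintegral_liminf_le (fun m => hmeasint _ _ (hv k) (hv m))
    _ ≤ 2 * C * (2⁻¹:ℝ≥0∞) ^ k := by
        apply Filter.liminf_le_of_frequently_le
        · apply Filter.Eventually.frequently
          rw [Filter.eventually_atTop]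
          exact ⟨k, fun m hm => hcauchy k m hm⟩
        · isBoundedDefault


end WFK

open WFK in
/-- weighted Fréchet–Kolmogorov criterion, Lemma 2.4: if `w` and
`w^{-1/(p₀-1)}` are weights for some `p₀ > 1`, `0 < p < ∞`, and `𝓕 ⊆ L^p(w)` is bounded,
uniformly vanishes at infinity, and is uniformly equicontinuous, then `𝓕` is sequentially
compact in `L^p(w)`. -/
theorem weighted_frechet_kolmogorov (n : ℕ) (hn : 1 ≤ n) (w : En n → ℝ)
    (hw0 : ∀ x, 0 ≤ w x) (hw : LocallyIntegrable w volume)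
    (p₀ : ℝ) (hp₀ : 1 < p₀)
    (hw' : LocallyIntegrable (fun x => w x ^ (-(1/(p₀ - 1)))) volume)
    (p : ℝ) (hp : 0 < p) (F : Set (En n → ℝ))
    (hFmeas : ∀ f ∈ F, AEStronglyMeasurable f volume)
    (hFbdd : ∃ B : ℝ, ∀ f ∈ F,
      (∫⁻ x, ENNReal.ofReal (|f x| ^ p * w x)) ≤ ENNReal.ofReal B)
    (hFvanish : Tendsto (fun N : ℝ => ⨆ f ∈ F,
      ∫⁻ x in {x : En n | N < ‖x‖}, ENNReal.ofReal (|f x| ^ p * w x)) atTop (𝓝 0))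
    (hFequi : Tendsto (fun h : En n => ⨆ f ∈ F,
      ∫⁻ x, ENNReal.ofReal (|f (x + h) - f x| ^ p * w x)) (𝓝 0) (𝓝 0)) :
    ∀ u : ℕ → En n → ℝ, (∀ k, u k ∈ F) →
      ∃ φ : ℕ → ℕ, StrictMono φ ∧ ∃ f : En n → ℝ,
        Tendsto (fun k => ∫⁻ x, ENNReal.ofReal (|u (φ k) x - f x| ^ p * w x))
          atTop (𝓝 0) := by
  classical
  intro u hu
  obtain ⟨B, hB⟩ := hFbdd
  set P : ℝ≥0∞ := ENNReal.ofReal (2 ^ p) with hPdef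
  have hP0 : P ≠ 0 := by
    simp only [hPdef, ne_eq, ENNReal.ofReal_eq_zero, not_le]
    positivity
  have hPtop : P ≠ ⊤ := ENNReal.ofReal_ne_top
  -- the net condition
  have net : ∀ m : ℕ, ∃ G : Set (En n → ℝ), G.Finite ∧
      (∀ f ∈ F, ∃ g ∈ G, Dst p w f g ≤ (2⁻¹ : ℝ≥0∞) ^ m) ∧
      (∀ g ∈ G, ∀ f₁ ∈ F, ∀ f₂ ∈ F,
        Dst p w f₁ f₂ ≤ P * (Dst p w f₁ g + Dst p w g f₂)) := by
    intro m
    set ε : ℝ≥0∞ := (2⁻¹ : ℝ≥0∞) ^ m with hε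
    have hε0 : ε ≠ 0 := by
      simp only [hε]
      exact pow_ne_zero _ (by norm_num)
    have hεtop : ε ≠ ⊤ := by
      simp only [hε]
      exact ENNReal.pow_ne_top (by norm_num)
    have hε4 : (0:ℝ≥0∞) < ε / 4 := ENNReal.div_pos hε0 (by norm_num)
    -- choose N from the vanishing hypothesis
    have hvan := (hFvanish.eventually (eventually_mem_set.2 (Iio_mem_nhds hε4))).exists
    obtain ⟨N, hNs⟩ := hvan
    have hN : ∀ f ∈ F, (∫⁻ x in {x : En n | N < ‖x‖},
        ENNReal.ofReal (|f x| ^ p * w x)) ≤ ε / 4 := by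
      intro f hf
      refine le_trans ?_ hNs.le
      exact le_iSup₂ (f := fun f (_ : f ∈ F) =>
        ∫⁻ x in {x : En n | N < ‖x‖}, ENNReal.ofReal (|f x| ^ p * w x)) f hf
    -- choose δ from the equicontinuity hypothesis
    have hε₂pos : (0:ℝ≥0∞) < (ε / 4) / (P * 2 ^ (n + 1)) :=
      ENNReal.div_pos hε4.ne' (ENNReal.mul_ne_top hPtop (by simp))
    have hequiev := hFequi.eventually (eventually_mem_set.2 (Iio_mem_nhds hε₂pos))
    rw [Metric.eventually_nhds_iff] at hequiev
    obtain ⟨δ, hδ0, hδ⟩ := hequiev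
    have hequi : ∀ h : En n, ‖h‖ < δ → ∀ f ∈ F,
        (∫⁻ x, ENNReal.ofReal (|f (x + h) - f x| ^ p * w x)) ≤
          (ε / 4) / (P * 2 ^ (n + 1)) := by
      intro h hh f hf
      have h1 : dist h 0 < δ := by rwa [dist_zero_right]
      have h2 := hδ h1
      refine le_trans ?_ (le_of_lt h2)
      exact le_iSup₂ (f := fun f (_ : f ∈ F) =>
        ∫⁻ x, ENNReal.ofReal (|f (x + h) - f x| ^ p * w x)) f hf
    obtain ⟨G, hGfin, hGmeas, hGnet⟩ := tb p hp w hw0 hw F hFmeas B hB ε hε0 hεtop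
      N δ hδ0 hN hequi
    refine ⟨G, hGfin, hGnet, ?_⟩
    intro g hg f₁ hf₁ f₂ hf₂
    apply Dst_quasi p hp w hw0 f₁ g f₂
    exact (((((Real.continuous_rpow_const hp.le).comp continuous_abs).measurable).comp_aemeasurable
      ((hFmeas f₁ hf₁).aemeasurable.sub (hGmeas g hg).aemeasurable)).mul
      hw.aestronglyMeasurable.aemeasurable).ennreal_ofReal
  -- extract the subsequence
  obtain ⟨φ, hφmono, hφbound⟩ := extraction (Dst p w) F P
    (fun a b => Dst_comm p w a b) u hu net
  -- measurable representatives
  obtain ⟨w', hw'meas, hw'0, hww'⟩ := exists_w' w hw0 hw.aestronglyMeasurable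
  set v : ℕ → En n → ℝ := fun k => ((hFmeas _ (hu (φ k))).aemeasurable).mk _ with hv
  have hvmeas : ∀ k, Measurable (v k) :=
    fun k => ((hFmeas _ (hu (φ k))).aemeasurable).measurable_mk
  have hveq : ∀ k, u (φ k) =ᵐ[volume] v k :=
    fun k => ((hFmeas _ (hu (φ k))).aemeasurable).ae_eq_mk
  have hcong : ∀ (a a' b b' : En n → ℝ), a =ᵐ[volume] a' → b =ᵐ[volume] b' →
      Dst p w a b = Dst p w' a' b' := by
    intro a a' b b' ha hb
    apply lintegral_congr_ae
    filter_upwards [ha, hb, hww'] with x e1 e2 e3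
    rw [e1, e2, e3]
  have hcauchy : ∀ j k, j ≤ k → Dst p w' (v j) (v k) ≤ 2 * P * (2⁻¹ : ℝ≥0∞) ^ j := by
    intro j k hjk
    rw [← hcong _ _ _ _ (hveq j) (hveq k)]
    exact hφbound j k hjk
  obtain ⟨f, hflim⟩ := lim_of_cauchy p hp w' hw'meas hw'0 v hvmeas P hPtop hcauchy
  refine ⟨φ, hφmono, f, ?_⟩
  have hbd : ∀ k, (∫⁻ x, ENNReal.ofReal (|u (φ k) x - f x| ^ p * w x))
      ≤ 2 * P * (2⁻¹ : ℝ≥0∞) ^ k := by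
    intro k
    calc (∫⁻ x, ENNReal.ofReal (|u (φ k) x - f x| ^ p * w x))
        = Dst p w (u (φ k)) f := rfl
      _ = Dst p w' (v k) f := hcong _ _ _ _ (hveq k) EventuallyEq.rfl
      _ ≤ 2 * P * (2⁻¹ : ℝ≥0∞) ^ k := hflim k
  have hgeom : Tendsto (fun k : ℕ => 2 * P * (2⁻¹ : ℝ≥0∞) ^ k) atTop (𝓝 0) := by
    have h1 : Tendsto (fun k : ℕ => (2⁻¹ : ℝ≥0∞) ^ k) atTop (𝓝 0) :=
      ENNReal.tendsto_pow_atTop_nhds_zero_of_lt_one (by norm_num)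
    have h2 : Tendsto (fun k : ℕ => (2 * P) * (2⁻¹ : ℝ≥0∞) ^ k) atTop (𝓝 ((2 * P) * 0)) :=
      ENNReal.Tendsto.const_mul h1 (Or.inr (ENNReal.mul_ne_top (by norm_num) hPtop))
    simpa using h2
  exact tendsto_of_tendsto_of_tendsto_of_le_of_le tendsto_const_nhds hgeom
    (fun k => zero_le) hbd

end
end
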